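/- arXiv:2407.17608 — 3 statements merged into one kernel-verified Lean document; each statement's English description precedes it below -/
import Mathlib

section
/- Let σ be a non-crossing pairing of the (m_1,…,m_r)-annulus (σ ∈ NC_2(m_1,…,m_r)) and let B = {u,v} be a through string of σ, i.e. a cycle of σ whose two elements lie in different cycles of γ. Let σ' = σ·(u,v) (so u,v become fixed points). Then B is cutting (i.e. #(γ ∨ σ') = 2) if and only if u and v lie in the same cycle of γσ (i.e. B is a loop block). -/
/-- The setoid on `α` whose classes are the cycles of the permutation `π`. -/
def cycleSetoid {α : Type*} (π : Equiv.Perm α) : Setoid α :=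
  ⟨π.SameCycle, ⟨fun x => Equiv.Perm.SameCycle.refl π x,
    fun h => h.symm, fun h1 h2 => h1.trans h2⟩⟩

/-- The number of cycles (including fixed points) of a permutation. -/
noncomputable def numCycles {α : Type*} (π : Equiv.Perm α) : ℕ :=
  Nat.card (Quotient (cycleSetoid π))

/-- The index set of the `(m 0, …, m (r-1))`-annulus. -/
def annIndex (r : ℕ) (m : Fin r → ℕ) : Type := Σ i : Fin r, Fin (m i)

instance (r : ℕ) (m : Fin r → ℕ) : DecidableEq (annIndex r m) := by
  unfold annIndex; infer_instance

/-- The permutation `γ_{m_1,…,m_r}` whose cycles are the `r` discrete circles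
of sizes `m 0, …, m (r-1)`. -/
def gammaAnn (r : ℕ) (m : Fin r → ℕ) : Equiv.Perm (annIndex r m) :=
  Equiv.sigmaCongrRight fun i => finRotate (m i)

open Equiv Equiv.Perm

namespace AnnHelper

variable {α : Type*}

/-- The setoid identifying `a` and `b` (and nothing else). -/
def pairS (a b : α) : Setoid α :=
  ⟨fun x y => x = y ∨ (x = a ∧ y = b) ∨ (x = b ∧ y = a), by
    refine ⟨fun x => Or.inl rfl, ?_, ?_⟩
    · rintro x y (rfl | ⟨rfl, rfl⟩ | ⟨rfl, rfl⟩)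
      · exact Or.inl rfl
      · exact Or.inr (Or.inr ⟨rfl, rfl⟩)
      · exact Or.inr (Or.inl ⟨rfl, rfl⟩)
    · rintro x y z h1 h2
      rcases h1 with h1 | ⟨h1a, h1b⟩ | ⟨h1a, h1b⟩ <;>
        rcases h2 with h2 | ⟨h2a, h2b⟩ | ⟨h2a, h2b⟩ <;> subst_vars <;> tauto⟩

lemma pairS_iff (a b x y : α) :
    pairS a b x y ↔ (x = y ∨ (x = a ∧ y = b) ∨ (x = b ∧ y = a)) := Iff.rfl

lemma pairS_rel (a b : α) : pairS a b a b := (pairS_iff a b a b).mpr (Or.inr (Or.inl ⟨rfl, rfl⟩))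

lemma pairS_le {s : Setoid α} {a b : α} (h : s a b) : pairS a b ≤ s := by
  intro x y hxy
  rcases (pairS_iff a b x y).mp hxy with rfl | ⟨rfl, rfl⟩ | ⟨rfl, rfl⟩
  · exact s.refl' x
  · exact h
  · exact s.symm' h

lemma sup_pairS_eq {s : Setoid α} {a b : α} (h : s a b) : s ⊔ pairS a b = s :=
  sup_eq_left.mpr (pairS_le h)

/-- Explicit description of the join of a setoid with a pair setoid. -/
lemma rel_sup_pair (s : Setoid α) (a b x y : α) :
    (s ⊔ pairS a b) x y ↔ s x y ∨ (s x a ∧ s b y) ∨ (s x b ∧ s a y) := by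
  let t : Setoid α :=
    ⟨fun x y => s x y ∨ (s x a ∧ s b y) ∨ (s x b ∧ s a y), by
      refine ⟨fun x => Or.inl (s.refl' x), ?_, ?_⟩
      · rintro x y (h | ⟨h1, h2⟩ | ⟨h1, h2⟩)
        · exact Or.inl (s.symm' h)
        · exact Or.inr (Or.inr ⟨s.symm' h2, s.symm' h1⟩)
        · exact Or.inr (Or.inl ⟨s.symm' h2, s.symm' h1⟩)
      · rintro x y z (h | ⟨h1, h2⟩ | ⟨h1, h2⟩) (h' | ⟨h1', h2'⟩ | ⟨h1', h2'⟩)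
        · exact Or.inl (s.trans' h h')
        · exact Or.inr (Or.inl ⟨s.trans' h h1', h2'⟩)
        · exact Or.inr (Or.inr ⟨s.trans' h h1', h2'⟩)
        · exact Or.inr (Or.inl ⟨h1, s.trans' h2 h'⟩)
        · exact Or.inl (s.trans' h1 (s.trans' (s.symm' h1') (s.trans' (s.symm' h2) h2')))
        · exact Or.inl (s.trans' h1 h2')
        · exact Or.inr (Or.inr ⟨h1, s.trans' h2 h'⟩)
        · exact Or.inl (s.trans' h1 h2')
        · exact Or.inl (s.trans' h1 (s.trans' (s.symm' h1') (s.trans' (s.symm' h2) h2')))⟩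
  have ht : s ⊔ pairS a b = t := by
    apply le_antisymm
    · refine sup_le ?_ ?_
      · intro x y h; exact Or.inl h
      · intro x y hxy
        rcases (pairS_iff a b x y).mp hxy with rfl | ⟨rfl, rfl⟩ | ⟨rfl, rfl⟩
        · exact Or.inl (s.refl' x)
        · exact Or.inr (Or.inl ⟨s.refl' _, s.refl' _⟩)
        · exact Or.inr (Or.inr ⟨s.refl' _, s.refl' _⟩)
    · rintro x y (h | ⟨h1, h2⟩ | ⟨h1, h2⟩)
      · exact le_sup_left (α := Setoid α) h
      · exact (s ⊔ pairS a b).trans' (le_sup_left (α := Setoid α) h1)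
          ((s ⊔ pairS a b).trans' (le_sup_right (α := Setoid α) (pairS_rel a b))
            (le_sup_left (α := Setoid α) h2))
      · exact (s ⊔ pairS a b).trans' (le_sup_left (α := Setoid α) h1)
          ((s ⊔ pairS a b).trans'
            ((s ⊔ pairS a b).symm' (le_sup_right (α := Setoid α) (pairS_rel a b)))
            (le_sup_left (α := Setoid α) h2))
  rw [ht]
  exact Iff.rfl


lemma card_quot_top [Finite α] [Nonempty α] :
    Nat.card (Quotient (⊤ : Setoid α)) = 1 := by
  have hs : Subsingleton (Quotient (⊤ : Setoid α)) :=
    ⟨by rintro ⟨x⟩ ⟨y⟩; exact Quotient.sound trivial⟩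
  have hn : Nonempty (Quotient (⊤ : Setoid α)) :=
    ⟨Quotient.mk _ (Classical.arbitrary α)⟩
  have : Unique (Quotient (⊤ : Setoid α)) := uniqueOfSubsingleton hn.some
  exact Nat.card_unique

lemma card_quot_sup_pair [Finite α] (s : Setoid α) {a b : α} (h : ¬ s a b) :
    Nat.card (Quotient (s ⊔ pairS a b)) + 1 = Nat.card (Quotient s) := by
  classical
  set t := s ⊔ pairS a b with ht
  set g0 : α → Quotient s := fun x => if s x b then Quotient.mk s a else Quotient.mk s x
    with hg0
  have h0 : ∀ x, ¬ g0 x = Quotient.mk s b := by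
    intro x
    by_cases hx : s x b
    · rw [hg0]; simp only [if_pos hx]
      exact fun hq => h (Quotient.exact hq)
    · rw [hg0]; simp only [if_neg hx]
      exact fun hq => hx (Quotient.exact hq)
  have wd : ∀ x y : α, t x y → g0 x = g0 y := by
    intro x y hxy
    rcases (rel_sup_pair s a b x y).mp hxy with hxy | ⟨h1, h2⟩ | ⟨h1, h2⟩
    · by_cases hxb : s x b
      · rw [hg0]; simp only [if_pos hxb, if_pos (s.trans' (s.symm' hxy) hxb)]
      · rw [hg0]
        simp only [if_neg hxb, if_neg (fun hyb => hxb (s.trans' hxy hyb))]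
        exact Quotient.sound hxy
    · have hxb : ¬ s x b := fun hxb => h (s.trans' (s.symm' h1) hxb)
      have hyb : s y b := s.symm' h2
      rw [hg0]; simp only [if_neg hxb, if_pos hyb]
      exact Quotient.sound h1
    · have hxb : s x b := h1
      have hyb : ¬ s y b := fun hyb => h (s.trans' h2 hyb)
      rw [hg0]; simp only [if_pos hxb, if_neg hyb]
      exact Quotient.sound h2
  have wd2 : ∀ x y : α, s x y → (Quotient.mk t x : Quotient t) = Quotient.mk t y :=
    fun x y hxy => Quotient.sound (le_sup_left (α := Setoid α) hxy)
  let g : Quotient t → {q : Quotient s // ¬ q = Quotient.mk s b} :=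
    Quotient.lift (fun x => (⟨g0 x, h0 x⟩ : {q : Quotient s // ¬ q = Quotient.mk s b}))
      (fun x y hxy => Subtype.ext (wd x y hxy))
  let ginv : {q : Quotient s // ¬ q = Quotient.mk s b} → Quotient t :=
    fun q => Quotient.lift (fun x => (Quotient.mk t x : Quotient t)) wd2 q.1
  have hli : Function.LeftInverse ginv g := by
    rintro ⟨x⟩
    show ginv ⟨g0 x, h0 x⟩ = Quotient.mk t x
    by_cases hx : s x b
    · have hval : g0 x = Quotient.mk s a := by rw [hg0]; simp only [if_pos hx]
      rw [show (⟨g0 x, h0 x⟩ : {q : Quotient s // ¬ q = Quotient.mk s b})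
        = ⟨Quotient.mk s a, hval ▸ h0 x⟩ from Subtype.ext hval]
      show Quotient.mk t a = Quotient.mk t x
      exact Quotient.sound ((rel_sup_pair s a b a x).mpr
        (Or.inr (Or.inl ⟨s.refl' a, s.symm' hx⟩)))
    · have hval : g0 x = Quotient.mk s x := by rw [hg0]; simp only [if_neg hx]
      rw [show (⟨g0 x, h0 x⟩ : {q : Quotient s // ¬ q = Quotient.mk s b})
        = ⟨Quotient.mk s x, hval ▸ h0 x⟩ from Subtype.ext hval]
      rfl
  have hri : Function.RightInverse ginv g := by
    rintro ⟨⟨x⟩, hq⟩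
    have hx : ¬ s x b := fun hxb => hq (Quotient.sound hxb)
    apply Subtype.ext
    show g0 x = Quotient.mk s x
    rw [hg0]; simp only [if_neg hx]
  let e : Quotient t ≃ {q : Quotient s // ¬ q = Quotient.mk s b} := ⟨g, ginv, hli, hri⟩
  have hcard : Nat.card (Quotient t)
      = Nat.card {q : Quotient s // ¬ q = Quotient.mk s b} :=
    Nat.card_congr e
  have hsplit : Nat.card (Quotient s) =
      Nat.card {q : Quotient s // q = Quotient.mk s b} +
      Nat.card {q : Quotient s // ¬ q = Quotient.mk s b} := by
    rw [← Nat.card_sum]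
    exact Nat.card_congr (Equiv.sumCompl _).symm
  have hone : Nat.card {q : Quotient s // q = Quotient.mk s b} = 1 := by
    have : Unique {q : Quotient s // q = Quotient.mk s b} :=
      ⟨⟨⟨Quotient.mk s b, rfl⟩⟩, by rintro ⟨q, rfl⟩; rfl⟩
    exact Nat.card_unique
  rw [hcard, hsplit, hone]
  omega

lemma card_sup_pair_le [Finite α] (s : Setoid α) (a b : α) :
    Nat.card (Quotient (s ⊔ pairS a b)) ≤ Nat.card (Quotient s) := by
  by_cases h : s a b
  · rw [sup_pairS_eq h]
  · have := card_quot_sup_pair s h; omega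

lemma card_le_card_sup_pair_add_one [Finite α] (s : Setoid α) (a b : α) :
    Nat.card (Quotient s) ≤ Nat.card (Quotient (s ⊔ pairS a b)) + 1 := by
  by_cases h : s a b
  · rw [sup_pairS_eq h]; omega
  · exact (card_quot_sup_pair s h).ge


lemma cycleSetoid_rel {π : Equiv.Perm α} {x y : α} (h : π.SameCycle x y) :
    cycleSetoid π x y := h

lemma sameCycle_apply_self (π : Equiv.Perm α) (x : α) : π.SameCycle x (π x) :=
  ⟨1, by simp⟩

lemma sameCycle_inv_apply_self (π : Equiv.Perm α) (x : α) : π.SameCycle x (π⁻¹ x) :=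
  ⟨-1, by simp⟩

lemma cycleSetoid_le [Finite α] (π : Equiv.Perm α) (s : Setoid α)
    (h : ∀ x, s x (π x)) : cycleSetoid π ≤ s := by
  intro x y hxy
  obtain ⟨i, -, -, rfl⟩ := (hxy : π.SameCycle x y).exists_pow_eq''
  clear hxy
  induction i with
  | zero => simpa using s.refl' x
  | succ n ihn =>
    have : (π ^ (n + 1)) x = π ((π ^ n) x) := by
      rw [pow_succ']; rfl
    rw [this]
    exact s.trans' ihn (h _)

lemma pair_le_rel_swap [DecidableEq α] {S : Setoid α} {a b : α}
    (hS : pairS a b ≤ S) (y : α) : S y (Equiv.swap a b y) := by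
  rcases eq_or_ne y a with rfl | hya
  · rw [Equiv.swap_apply_left]; exact hS (pairS_rel _ _)
  rcases eq_or_ne y b with rfl | hyb
  · rw [Equiv.swap_apply_right]; exact S.symm' (hS (pairS_rel _ _))
  · rw [Equiv.swap_apply_of_ne_of_ne hya hyb]

lemma sup_pair_swap [Finite α] [DecidableEq α] (π : Equiv.Perm α) (a b : α) :
    cycleSetoid (Equiv.swap a b * π) ⊔ pairS a b = cycleSetoid π ⊔ pairS a b := by
  apply le_antisymm
  · refine sup_le ?_ le_sup_right
    apply cycleSetoid_le
    intro x
    refine (cycleSetoid π ⊔ pairS a b).trans'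
      (le_sup_left (α := Setoid α) (sameCycle_apply_self π x)) ?_
    have : (Equiv.swap a b * π) x = Equiv.swap a b (π x) := rfl
    rw [this]
    exact pair_le_rel_swap le_sup_right (π x)
  · refine sup_le ?_ le_sup_right
    apply cycleSetoid_le
    intro x
    refine (cycleSetoid (Equiv.swap a b * π) ⊔ pairS a b).trans'
      (le_sup_left (α := Setoid α) (sameCycle_apply_self (Equiv.swap a b * π) x)) ?_
    have : π x = Equiv.swap a b ((Equiv.swap a b * π) x) := by
      simp [Equiv.Perm.mul_apply, Equiv.swap_apply_self]
    rw [this]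
    exact pair_le_rel_swap le_sup_right _

lemma sameCycle_merge [Finite α] [DecidableEq α] {π : Equiv.Perm α} {a b : α}
    (hab : a ≠ b) (h : ¬ π.SameCycle a b) : (Equiv.swap a b * π).SameCycle a b := by
  have hP : ∃ j : ℕ, 0 < j ∧ (π ^ j) a = a :=
    ⟨orderOf π, orderOf_pos π, by rw [pow_orderOf_eq_one]; rfl⟩
  classical
  set k := Nat.find hP with hkdef
  obtain ⟨hk0, hka⟩ : 0 < k ∧ (π ^ k) a = a := Nat.find_spec hP
  have hmin : ∀ j, j < k → ¬ (0 < j ∧ (π ^ j) a = a) := fun j hj => Nat.find_min hP hj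
  have key : ∀ j, j < k → ((Equiv.swap a b * π) ^ j) a = (π ^ j) a := by
    intro j
    induction j with
    | zero => simp
    | succ n ihn =>
      intro hn1
      have hn : n < k := Nat.lt_of_succ_lt hn1
      have h1 : ((Equiv.swap a b * π) ^ (n + 1)) a
          = (Equiv.swap a b * π) (((Equiv.swap a b * π) ^ n) a) := by
        rw [pow_succ']; rfl
      have h2 : (π ^ (n + 1)) a = π ((π ^ n) a) := by rw [pow_succ']; rfl
      rw [h1, ihn hn, h2]
      have hne1 : π ((π ^ n) a) ≠ a := by
        intro heq
        exact hmin (n + 1) hn1 ⟨Nat.succ_pos n, by rw [h2, heq]⟩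
      have hne2 : π ((π ^ n) a) ≠ b := by
        intro heq
        refine h ⟨((n + 1 : ℕ) : ℤ), ?_⟩
        rw [zpow_natCast, h2]
        exact heq
      show Equiv.swap a b (π ((π ^ n) a)) = π ((π ^ n) a)
      exact Equiv.swap_apply_of_ne_of_ne hne1 hne2
  refine ⟨(k : ℤ), ?_⟩
  rw [zpow_natCast]
  have hk : k = (k - 1) + 1 := by omega
  rw [hk, pow_succ']
  show (Equiv.swap a b * π) (((Equiv.swap a b * π) ^ (k - 1)) a) = b
  rw [key (k - 1) (by omega)]
  show Equiv.swap a b (π ((π ^ (k - 1)) a)) = b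
  have : π ((π ^ (k - 1)) a) = (π ^ k) a := by
    conv_rhs => rw [hk, pow_succ']
    rfl
  rw [this, hka, Equiv.swap_apply_left]

lemma sameCycle_split [Finite α] [DecidableEq α] {π : Equiv.Perm α} {a b : α}
    (hab : a ≠ b) (h : π.SameCycle a b) : ¬ (Equiv.swap a b * π).SameCycle a b := by
  classical
  obtain ⟨i, hi0, -, hib⟩ := h.exists_pow_eq''
  have hP : ∃ j : ℕ, 0 < j ∧ (π ^ j) a = b := ⟨i, hi0, hib⟩
  set k := Nat.find hP with hkdef
  obtain ⟨hk0, hkb⟩ : 0 < k ∧ (π ^ k) a = b := Nat.find_spec hP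
  have hmin : ∀ j, j < k → ¬ (0 < j ∧ (π ^ j) a = b) := fun j hj => Nat.find_min hP hj
  have hne : ∀ j, 0 < j → j < k → (π ^ j) a ≠ a ∧ (π ^ j) a ≠ b := by
    intro j hj0 hjk
    constructor
    · intro heq
      have hval : (π ^ (k - j)) a = b := by
        conv_lhs => rw [← heq]
        rw [← Equiv.Perm.mul_apply, ← pow_add, Nat.sub_add_cancel (le_of_lt hjk), hkb]
      exact hmin (k - j) (by omega) ⟨by omega, hval⟩
    · intro heq
      exact hmin j hjk ⟨hj0, heq⟩
  have key : ∀ n : ℕ, ∃ j, j < k ∧ ((Equiv.swap a b * π) ^ n) a = (π ^ j) a := by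
    intro n
    induction n with
    | zero => exact ⟨0, hk0, by simp⟩
    | succ n ihn =>
      obtain ⟨j, hjk, hj⟩ := ihn
      have h1 : ((Equiv.swap a b * π) ^ (n + 1)) a
          = (Equiv.swap a b * π) (((Equiv.swap a b * π) ^ n) a) := by
        rw [pow_succ']; rfl
      have h2 : π ((π ^ j) a) = (π ^ (j + 1)) a := by rw [pow_succ']; rfl
      rcases Nat.lt_or_ge (j + 1) k with hjk1 | hjk1
      · refine ⟨j + 1, hjk1, ?_⟩
        rw [h1, hj]
        show Equiv.swap a b (π ((π ^ j) a)) = (π ^ (j + 1)) a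
        rw [h2]
        exact Equiv.swap_apply_of_ne_of_ne (hne _ (Nat.succ_pos j) hjk1).1
          (hne _ (Nat.succ_pos j) hjk1).2
      · have hjk1' : j + 1 = k := by omega
        refine ⟨0, hk0, ?_⟩
        rw [h1, hj]
        show Equiv.swap a b (π ((π ^ j) a)) = (π ^ 0) a
        rw [h2, hjk1', hkb, Equiv.swap_apply_right, pow_zero]
        rfl
  intro hsc
  obtain ⟨n, -, -, hn⟩ := hsc.exists_pow_eq''
  obtain ⟨j, hjk, hj⟩ := key n
  rw [hn] at hj
  rcases Nat.eq_zero_or_pos j with rfl | hj0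
  · rw [pow_zero] at hj
    exact hab hj.symm
  · exact (hne j hj0 hjk).2 hj.symm

lemma numCycles_swap_mul_same [Finite α] [DecidableEq α] {π : Equiv.Perm α} {a b : α}
    (hab : a ≠ b) (h : π.SameCycle a b) :
    numCycles (Equiv.swap a b * π) = numCycles π + 1 := by
  have h3 := card_quot_sup_pair (cycleSetoid (Equiv.swap a b * π))
    (sameCycle_split hab h)
  rw [sup_pair_swap, sup_pairS_eq (cycleSetoid_rel h)] at h3
  exact h3.symm

lemma numCycles_swap_mul_not [Finite α] [DecidableEq α] {π : Equiv.Perm α} {a b : α}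
    (hab : a ≠ b) (h : ¬ π.SameCycle a b) :
    numCycles (Equiv.swap a b * π) + 1 = numCycles π := by
  have h3 := card_quot_sup_pair (cycleSetoid π) h
  rw [← sup_pair_swap (π := π) (a := a) (b := b),
    sup_pairS_eq (cycleSetoid_rel (sameCycle_merge hab h))] at h3
  exact h3


lemma numCycles_one [Finite α] : numCycles (1 : Equiv.Perm α) = Nat.card α := by
  have e : Quotient (cycleSetoid (1 : Equiv.Perm α)) ≃ α :=
    ⟨Quotient.lift id (fun x y h => Equiv.Perm.sameCycle_one.mp h),
      Quotient.mk _, by rintro ⟨x⟩; rfl, fun x => rfl⟩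
  exact Nat.card_congr e

lemma cycleSetoid_one_le (s : Setoid α) : cycleSetoid (1 : Equiv.Perm α) ≤ s := by
  intro x y h
  have : x = y := Equiv.Perm.sameCycle_one.mp h
  rw [this]

lemma genus [Fintype α] [DecidableEq α] (ap bp : Equiv.Perm α) :
    numCycles ap + numCycles bp + numCycles (ap⁻¹ * bp) ≤
      Nat.card α + 2 * Nat.card (Quotient (cycleSetoid ap ⊔ cycleSetoid bp)) := by
  suffices H : ∀ (n : ℕ) (ap : Equiv.Perm α), ap.support.card ≤ n → ∀ bp : Equiv.Perm α,
      numCycles ap + numCycles bp + numCycles (ap⁻¹ * bp) ≤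
        Nat.card α + 2 * Nat.card (Quotient (cycleSetoid ap ⊔ cycleSetoid bp)) from
    H ap.support.card ap le_rfl bp
  intro n
  induction n with
  | zero =>
    intro ap hcard bp
    have hap : ap = 1 := by
      rw [← Equiv.Perm.support_eq_empty_iff]
      exact Finset.card_eq_zero.mp (Nat.le_zero.mp hcard)
    subst hap
    rw [numCycles_one, inv_one, one_mul, sup_eq_right.mpr (cycleSetoid_one_le _)]
    show Nat.card α + numCycles bp + numCycles bp ≤ Nat.card α + 2 * numCycles bp
    omega
  | succ n ihn =>
    intro ap hcard bp
    by_cases hap1 : ap = 1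
    · subst hap1
      rw [numCycles_one, inv_one, one_mul, sup_eq_right.mpr (cycleSetoid_one_le _)]
      show Nat.card α + numCycles bp + numCycles bp ≤ Nat.card α + 2 * numCycles bp
      omega
    obtain ⟨a, ha⟩ : ∃ x, ap x ≠ x := by
      by_contra hc; push_neg at hc; exact hap1 (Equiv.ext hc)
    set b := ap a with hbdef
    have hba : b ≠ a := ha
    set τ := Equiv.swap a b with hτdef
    set a2 := τ * ap with ha2def
    have hapeq : ap = τ * a2 := by
      rw [ha2def, ← mul_assoc, hτdef, Equiv.swap_mul_self, one_mul]
    have h2a : a2 a = a := by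
      show τ (ap a) = a
      rw [← hbdef, hτdef, Equiv.swap_apply_right]
    -- support decreases
    have hsub : a2.support ⊆ ap.support.erase a := by
      intro x hx
      have hx' : a2 x ≠ x := Equiv.Perm.mem_support.mp hx
      have hxa : x ≠ a := fun h => hx' (h ▸ h2a)
      refine Finset.mem_erase.mpr ⟨hxa, Equiv.Perm.mem_support.mpr ?_⟩
      intro hfix
      apply hx'
      show τ (ap x) = x
      rw [hfix]
      have hxb : x ≠ b := by
        rintro rfl
        have hba2 : ap b = ap a := by rw [hfix, hbdef]
        exact hba (ap.injective hba2)
      exact Equiv.swap_apply_of_ne_of_ne hxa hxb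
    have hamem : a ∈ ap.support := Equiv.Perm.mem_support.mpr ha
    have hcard2 : a2.support.card ≤ n := by
      have h1 := Finset.card_le_card hsub
      have h2 := Finset.card_erase_of_mem hamem
      omega
    have IH := ihn a2 hcard2 bp
    -- fixed-point facts
    have hinva : a2⁻¹ a = a := by
      rw [Equiv.Perm.inv_eq_iff_eq, h2a]
    set b' := a2⁻¹ b with hb'def
    have hab' : a ≠ b' := by
      intro h
      apply hba
      rw [hb'def] at h
      have : a2 a = b := by rw [h, ← Equiv.Perm.mul_apply, mul_inv_cancel, Equiv.Perm.one_apply]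
      rw [← this, h2a]
    have hnota2 : ¬ a2.SameCycle a b := by
      rintro ⟨i, hi⟩
      rw [Equiv.Perm.zpow_apply_eq_self_of_apply_eq_self h2a i] at hi
      exact hba hi.symm
    have hnum1 : numCycles ap + 1 = numCycles a2 := by
      rw [hapeq, hτdef]
      exact numCycles_swap_mul_not (Ne.symm hba) hnota2
    have hfact : ap⁻¹ * bp = Equiv.swap a b' * (a2⁻¹ * bp) := by
      have hswap : Equiv.swap a b' = a2⁻¹ * τ * a2 := by
        have := Equiv.swap_apply_apply (a2⁻¹ : Equiv.Perm α) a b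
        rw [inv_inv, hinva, ← hb'def, ← hτdef] at this
        rw [this]
      calc ap⁻¹ * bp = (τ * a2)⁻¹ * bp := by rw [← hapeq]
        _ = a2⁻¹ * τ * bp := by
            rw [mul_inv_rev, hτdef, Equiv.swap_inv, ← hτdef]
        _ = (a2⁻¹ * τ * a2) * (a2⁻¹ * bp) := by group
        _ = Equiv.swap a b' * (a2⁻¹ * bp) := by rw [hswap]
    have hsp := sup_pair_swap ap a b
    rw [← ha2def] at hsp
    have hsup : (cycleSetoid ap ⊔ cycleSetoid bp) ⊔ pairS a b
        = (cycleSetoid a2 ⊔ cycleSetoid bp) ⊔ pairS a b := by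
      rw [sup_right_comm, ← hsp, sup_right_comm]
    by_cases hS : (a2⁻¹ * bp).SameCycle a b'
    · have hnum2 : numCycles (ap⁻¹ * bp) = numCycles (a2⁻¹ * bp) + 1 := by
        rw [hfact]
        exact numCycles_swap_mul_same hab' hS
      have hJle : cycleSetoid (a2⁻¹ * bp) ≤ cycleSetoid a2 ⊔ cycleSetoid bp := by
        apply cycleSetoid_le
        intro x
        refine (cycleSetoid a2 ⊔ cycleSetoid bp).trans'
          (le_sup_right (α := Setoid α) (sameCycle_apply_self bp x)) ?_
        exact le_sup_left (α := Setoid α) (sameCycle_inv_apply_self a2 (bp x))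
      have hJab : (cycleSetoid a2 ⊔ cycleSetoid bp) a b := by
        refine (cycleSetoid a2 ⊔ cycleSetoid bp).trans' (hJle hS) ?_
        refine le_sup_left (α := Setoid α) (⟨1, ?_⟩ : a2.SameCycle b' b)
        rw [zpow_one, hb'def, ← Equiv.Perm.mul_apply, mul_inv_cancel, Equiv.Perm.one_apply]
      have hKrel : Nat.card (Quotient (cycleSetoid a2 ⊔ cycleSetoid bp))
          ≤ Nat.card (Quotient (cycleSetoid ap ⊔ cycleSetoid bp)) := by
        have := card_sup_pair_le (cycleSetoid ap ⊔ cycleSetoid bp) a b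
        rw [hsup, sup_pairS_eq hJab] at this
        exact this
      omega
    · have hnum2 : numCycles (ap⁻¹ * bp) + 1 = numCycles (a2⁻¹ * bp) := by
        rw [hfact]
        exact numCycles_swap_mul_not hab' hS
      have hKrel : Nat.card (Quotient (cycleSetoid a2 ⊔ cycleSetoid bp))
          ≤ Nat.card (Quotient (cycleSetoid ap ⊔ cycleSetoid bp)) + 1 := by
        have h1 := card_le_card_sup_pair_add_one (cycleSetoid a2 ⊔ cycleSetoid bp) a b
        rw [← hsup] at h1
        have h2 := card_sup_pair_le (cycleSetoid ap ⊔ cycleSetoid bp) a b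
        omega
      omega

end AnnHelper

instance (r : ℕ) (m : Fin r → ℕ) : Fintype (annIndex r m) := by
  unfold annIndex; infer_instance

open AnnHelper in
/-- Let `σ ∈ NC₂(m_1,…,m_r)` be a non-crossing pairing of the annulus
(a fixed-point-free involution with `σ ∨ γ = 1` and
`#(σ)+#(γ)+#(σ⁻¹γ) = m+2`), and let `{u, σ u}` be a through string (its two
elements lie in different cycles of `γ`).  Let `σ' = σ·(u, σ u)`, in which
`u` and `σ u` become fixed points.  Then `{u, σ u}` is cutting, i.e.
`#(γ ∨ σ') = 2`, if and only if `u` and `σ u` lie in the same cycle of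
`γσ` (i.e. `{u, σ u}` is a loop block). -/
theorem cutting_iff_loopBlock (r : ℕ) (m : Fin r → ℕ)
    (σ : Equiv.Perm (annIndex r m))
    (hfix : ∀ x, σ x ≠ x) (hinv : σ * σ = 1)
    (hjoin : cycleSetoid σ ⊔ cycleSetoid (gammaAnn r m) = ⊤)
    (hcnt : numCycles σ + numCycles (gammaAnn r m) +
        numCycles (σ⁻¹ * gammaAnn r m) = Nat.card (annIndex r m) + 2)
    (u : annIndex r m)
    (hthrough : ¬ (gammaAnn r m).SameCycle u (σ u)) :
    Nat.card (Quotient (cycleSetoid (gammaAnn r m) ⊔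
        cycleSetoid (σ * Equiv.swap u (σ u)))) = 2 ↔
      (gammaAnn r m * σ).SameCycle u (σ u) := by
  classical
  haveI : Nonempty (annIndex r m) := ⟨u⟩
  set γ := gammaAnn r m with hγ
  set v := σ u with hv
  have hvu : v ≠ u := hfix u
  have huv : u ≠ v := Ne.symm hvu
  have hσv : σ v = u := by
    have := congrArg (fun f : Equiv.Perm (annIndex r m) => f u) hinv
    simpa [Equiv.Perm.mul_apply, ← hv] using this
  have hσinv : σ⁻¹ = σ := inv_eq_of_mul_eq_one_right hinv
  set τ := Equiv.swap u v with hτ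
  set σ' := σ * τ with hσ'
  have hcomm : σ * τ = τ * σ := by
    ext x
    simp only [Equiv.Perm.mul_apply, hτ]
    rcases eq_or_ne x u with rfl | hxu
    · rw [Equiv.swap_apply_left, hσv, ← hv, Equiv.swap_apply_right]
    rcases eq_or_ne x v with rfl | hxv
    · rw [Equiv.swap_apply_right, hσv, ← hv, Equiv.swap_apply_left]
    · have h1 : σ x ≠ u := fun h => hxv (σ.injective (h.trans hσv.symm))
      have h2 : σ x ≠ v := fun h => hxu (σ.injective (h.trans hv))
      rw [Equiv.swap_apply_of_ne_of_ne hxu hxv, Equiv.swap_apply_of_ne_of_ne h1 h2]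
  have hSCσ : σ.SameCycle u v := ⟨1, by rw [zpow_one, ← hv]⟩
  have hnumσ' : numCycles σ' = numCycles σ + 1 := by
    rw [hσ', hcomm, hτ]
    exact numCycles_swap_mul_same huv hSCσ
  set ζ := σ⁻¹ * γ with hζ
  have hσ'invγ : σ'⁻¹ * γ = τ * ζ := by
    rw [hσ', mul_inv_rev, hτ, Equiv.swap_inv, ← hτ, hζ, mul_assoc]
  have hloopiff : (γ * σ).SameCycle u v ↔ ζ.SameCycle u v := by
    have h1 : σ * ζ = γ := by rw [hζ]; exact mul_inv_cancel_left σ γ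
    have hconj : γ * σ = σ * ζ * σ⁻¹ := by rw [h1, hσinv]
    rw [hconj, Equiv.Perm.sameCycle_conj, hσinv, hσv, ← hv]
    exact Equiv.Perm.sameCycle_comm
  have hσ'pair : cycleSetoid σ' ⊔ pairS u v = cycleSetoid σ ⊔ pairS u v := by
    rw [hσ', hcomm, hτ]
    exact sup_pair_swap σ u v
  have hpairtop : (cycleSetoid γ ⊔ cycleSetoid σ') ⊔ pairS u v = ⊤ := by
    rw [sup_assoc, hσ'pair, ← sup_assoc, sup_comm (cycleSetoid γ) (cycleSetoid σ),
      hjoin, top_sup_eq]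
  constructor
  · intro hc2
    rw [hloopiff]
    by_contra hnζ
    have hm : (τ * ζ).SameCycle u v := by
      rw [hτ]
      exact sameCycle_merge huv hnζ
    rw [← hσ'invγ] at hm
    have hrel : (cycleSetoid γ ⊔ cycleSetoid σ') u v := by
      have hle : cycleSetoid (σ'⁻¹ * γ) ≤ cycleSetoid γ ⊔ cycleSetoid σ' := by
        apply cycleSetoid_le
        intro x
        refine (cycleSetoid γ ⊔ cycleSetoid σ').trans'
          (le_sup_left (α := Setoid _) (sameCycle_apply_self γ x)) ?_
        exact le_sup_right (α := Setoid _) (sameCycle_inv_apply_self σ' (γ x))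
      exact hle hm
    have htop : cycleSetoid γ ⊔ cycleSetoid σ' = ⊤ := by
      rw [← sup_pairS_eq hrel, hpairtop]
    rw [htop, card_quot_top] at hc2
    exact absurd hc2 (by norm_num)
  · intro hl
    have hζsc : ζ.SameCycle u v := hloopiff.mp hl
    have hnum2 : numCycles (σ'⁻¹ * γ) = numCycles ζ + 1 := by
      rw [hσ'invγ, hτ]
      exact numCycles_swap_mul_same huv hζsc
    have hG := genus σ' γ
    rw [sup_comm (cycleSetoid σ') (cycleSetoid γ)] at hG
    have h1 := card_le_card_sup_pair_add_one (cycleSetoid γ ⊔ cycleSetoid σ') u v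
    rw [hpairtop, card_quot_top] at h1
    omega
end

section
/- Let σ ∈ NC_2(m_1,…,m_r) and let (a,b),(c,d) be through strings of σ such that, in the quotient graph of T by the cycles of γσ, the edges e_a and e_c connect the same ordered pair of distinct vertices (same orientation). Define σ^switch = σ·(a,b)(c,d)(a,d)(b,c), replacing the pairs {a,b},{c,d} by {a,d},{b,c}. Then: (i) γ ∨ σ^switch has exactly two blocks A and B, with {a,d} ⊆ A and {b,c} ⊆ B; (ii) the restrictions σ^switch|_A and σ^switch|_B are non-crossing pairings relative to γ|_A and γ|_B respectively; (iii) the cycle partition of γσ restricted to A equals that of γ|_A σ^switch|_A, and similarly for B. -/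
instance (r : ℕ) (m : Fin r → ℕ) : Finite (annIndex r m) := by
  unfold annIndex; infer_instance

/-! ### Auxiliary lemmas -/

section SwitchAux

open Equiv Equiv.Perm

variable {α : Type*}

/-- If an equivalence relation relates every `z` to `π z`, it contains `SameCycle π`. -/
theorem sameCycle_le_setoid [Finite α] (π : Equiv.Perm α) (E : Setoid α)
    (h : ∀ z, E z (π z)) {x y : α} (hxy : π.SameCycle x y) : E x y := by
  obtain ⟨n, -, -, rfl⟩ := hxy.exists_pow_eq''
  clear hxy
  induction n with
  | zero => simpa using E.refl' x
  | succ n ih =>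
      have : (π ^ (n + 1)) x = π ((π ^ n) x) := by
        rw [pow_succ']; rfl
      rw [this]
      exact E.trans' ih (h _)

theorem card_quot_le_of_le [Finite α] {R T : Setoid α} (h : R ≤ T) :
    Nat.card (Quotient T) ≤ Nat.card (Quotient R) := by
  apply Nat.card_le_card_of_surjective
    (Quotient.map' (fun x => x) (fun a b hab => h hab))
  intro q
  obtain ⟨x, rfl⟩ := Quotient.exists_rep q
  exact ⟨Quotient.mk'' x, rfl⟩

theorem card_quot_lt [Finite α] {R T : Setoid α} (h : R ≤ T) {x y : α}
    (hT : T x y) (hR : ¬ R x y) :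
    Nat.card (Quotient T) < Nat.card (Quotient R) := by
  classical
  letI : Fintype (Quotient R) := Fintype.ofFinite _
  letI : Fintype (Quotient T) := Fintype.ofFinite _
  set φ : Quotient R → Quotient T := Quotient.map' (fun x => x) (fun a b hab => h hab) with hφ
  have hsurj : Function.Surjective φ := by
    intro q
    obtain ⟨z, rfl⟩ := Quotient.exists_rep q
    exact ⟨Quotient.mk'' z, rfl⟩
  rcases lt_or_ge (Nat.card (Quotient T)) (Nat.card (Quotient R)) with h' | h'
  · exact h'
  · exfalso
    have hcard : Fintype.card (Quotient R) = Fintype.card (Quotient T) := by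
      have h2 := Nat.card_le_card_of_surjective φ hsurj
      simp only [Nat.card_eq_fintype_card] at h2 h' ⊢
      omega
    have hbij : Function.Bijective φ :=
      (Fintype.bijective_iff_surjective_and_card φ).2 ⟨hsurj, hcard⟩
    have heq : φ (Quotient.mk'' x) = φ (Quotient.mk'' y) := by
      simp only [hφ, Quotient.map'_mk'']
      exact Quotient.sound' hT
    have := hbij.1 heq
    exact hR (Quotient.exact' this)

/-- The join of a setoid `R` with the pair relation identifying `u` and `v`. -/
def pairJoin (R : Setoid α) (u v : α) : Setoid α :=
  ⟨fun x y => R x y ∨ (R x u ∧ R v y) ∨ (R x v ∧ R u y),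
   ⟨fun x => Or.inl (R.refl' x),
    by
      rintro x y (h | ⟨h1, h2⟩ | ⟨h1, h2⟩)
      · exact Or.inl (R.symm' h)
      · exact Or.inr (Or.inr ⟨R.symm' h2, R.symm' h1⟩)
      · exact Or.inr (Or.inl ⟨R.symm' h2, R.symm' h1⟩),
    by
      rintro x y z (h | ⟨h1, h2⟩ | ⟨h1, h2⟩) (g | ⟨g1, g2⟩ | ⟨g1, g2⟩)
      · exact Or.inl (R.trans' h g)
      · exact Or.inr (Or.inl ⟨R.trans' h g1, g2⟩)
      · exact Or.inr (Or.inr ⟨R.trans' h g1, g2⟩)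
      · exact Or.inr (Or.inl ⟨h1, R.trans' h2 g⟩)
      · exact Or.inl (R.trans' (R.trans' h1 (R.symm' (R.trans' h2 g1))) g2)
      · exact Or.inl (R.trans' h1 g2)
      · exact Or.inr (Or.inr ⟨h1, R.trans' h2 g⟩)
      · exact Or.inl (R.trans' h1 g2)
      · exact Or.inl (R.trans' (R.trans' h1 (R.symm' (R.trans' h2 g1))) g2)⟩⟩

theorem pairJoin_rel (R : Setoid α) (u v : α) (x y : α) :
    pairJoin R u v x y ↔ (R x y ∨ (R x u ∧ R v y) ∨ (R x v ∧ R u y)) := Iff.rfl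

theorem le_pairJoin (R : Setoid α) (u v : α) : R ≤ pairJoin R u v :=
  fun _ _ h => Or.inl h

theorem card_quot_le_pairJoin [Finite α] (R : Setoid α) (u v : α) :
    Nat.card (Quotient R) ≤ Nat.card (Quotient (pairJoin R u v)) + 1 := by
  classical
  set T := pairJoin R u v with hT
  have hwd : ∀ (x y : α), R x y →
      ((if R x v then (none : Option (Quotient T)) else some (Quotient.mk'' x)) =
        if R y v then none else some (Quotient.mk'' y)) := by
    intro x y hxy
    by_cases hx : R x v
    · rw [if_pos hx, if_pos (R.trans' (R.symm' hxy) hx)]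
    · rw [if_neg hx, if_neg (fun hy => hx (R.trans' hxy hy))]
      exact congrArg some (Quotient.sound' (Or.inl hxy))
  set ψ : Quotient R → Option (Quotient T) :=
    Quotient.lift (fun z => if R z v then (none : Option (Quotient T)) else some (Quotient.mk'' z))
      hwd with hψ
  have hinj : Function.Injective ψ := by
    intro q1 q2 heq
    obtain ⟨z1, rfl⟩ := Quotient.exists_rep q1
    obtain ⟨z2, rfl⟩ := Quotient.exists_rep q2
    have heq' : (if R z1 v then (none : Option (Quotient T)) else some (Quotient.mk'' z1)) =
        if R z2 v then none else some (Quotient.mk'' z2) := heq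
    by_cases h1 : R z1 v <;> by_cases h2 : R z2 v
    · exact Quotient.sound' (R.trans' h1 (R.symm' h2))
    · rw [if_pos h1, if_neg h2] at heq'; exact absurd heq' (by simp)
    · rw [if_neg h1, if_pos h2] at heq'; exact absurd heq' (by simp)
    · rw [if_neg h1, if_neg h2] at heq'
      have := Quotient.exact' (Option.some_injective _ heq')
      rcases this with h | ⟨g1, g2⟩ | ⟨g1, g2⟩
      · exact Quotient.sound' h
      · exact absurd g2 (fun g => h2 (R.symm' g))
      · exact absurd g1 h1
  calc Nat.card (Quotient R) ≤ Nat.card (Option (Quotient T)) := by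
        letI : Fintype (Quotient T) := Fintype.ofFinite _
        exact Nat.card_le_card_of_injective ψ hinj
    _ = Nat.card (Quotient T) + 1 := Finite.card_option

variable [Finite α] [DecidableEq α]

/-- Multiplying by a transposition on the left increases `numCycles` by at most 1. -/
theorem numCycles_swap_mul_le (π : Equiv.Perm α) (u v : α) :
    numCycles (Equiv.swap u v * π) ≤ numCycles π + 1 := by
  rcases eq_or_ne u v with rfl | huv
  · simp only [Equiv.swap_self]
    have : (Equiv.refl α : Equiv.Perm α) * π = π := by ext x; rfl
    rw [this]; omega
  set R := cycleSetoid (Equiv.swap u v * π) with hR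
  have hle : cycleSetoid π ≤ pairJoin R u v := by
    intro x y hxy
    refine sameCycle_le_setoid π (pairJoin R u v) ?_ hxy
    intro z
    have hzw : R z ((Equiv.swap u v * π) z) := ⟨1, by simp⟩
    have hπz : π z = Equiv.swap u v ((Equiv.swap u v * π) z) := by
      simp [Equiv.Perm.mul_apply]
    rcases eq_or_ne ((Equiv.swap u v * π) z) u with h1 | h1
    · rw [pairJoin_rel]
      rw [h1] at hzw
      rw [hπz, h1, Equiv.swap_apply_left]
      exact Or.inr (Or.inl ⟨hzw, R.refl' v⟩)
    rcases eq_or_ne ((Equiv.swap u v * π) z) v with h2 | h2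
    · rw [pairJoin_rel]
      rw [h2] at hzw
      rw [hπz, h2, Equiv.swap_apply_right]
      exact Or.inr (Or.inr ⟨hzw, R.refl' u⟩)
    · rw [pairJoin_rel]
      rw [hπz, Equiv.swap_apply_of_ne_of_ne h1 h2]
      exact Or.inl hzw
  calc numCycles (Equiv.swap u v * π) ≤ Nat.card (Quotient (pairJoin R u v)) + 1 :=
        card_quot_le_pairJoin R u v
    _ ≤ numCycles π + 1 := by
        have := card_quot_le_of_le hle
        simp only [numCycles] at *
        omega

theorem le_numCycles_swap_mul (π : Equiv.Perm α) (u v : α) :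
    numCycles π ≤ numCycles (Equiv.swap u v * π) + 1 := by
  have := numCycles_swap_mul_le (Equiv.swap u v * π) u v
  rwa [← mul_assoc, Equiv.swap_mul_self, one_mul] at this

/-- Merging: a transposition joining two distinct cycles puts `u, v` on the same cycle. -/
theorem sameCycle_swap_mul_of_not_sameCycle (π : Equiv.Perm α) {u v : α}
    (h : ¬ π.SameCycle u v) : (Equiv.swap u v * π).SameCycle u v := by
  classical
  have huv : u ≠ v := fun h' => h (h' ▸ Equiv.Perm.SameCycle.refl π u)
  by_cases hu : π u = u
  · exact ⟨1, by simp [hu, Equiv.Perm.mul_apply]⟩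
  have hper : ∃ n, 0 < n ∧ (π ^ n) u = u := by
    refine ⟨orderOf π, orderOf_pos π, ?_⟩
    rw [pow_orderOf_eq_one]; rfl
  set n₀ := Nat.find hper with hn₀
  have hn₀pos : 0 < n₀ := (Nat.find_spec hper).1
  have hn₀eq : (π ^ n₀) u = u := (Nat.find_spec hper).2
  have hmin : ∀ j, 0 < j → j < n₀ → (π ^ j) u ≠ u := fun j hj hjlt hju =>
    Nat.find_min hper hjlt ⟨hj, hju⟩
  have hnotv : ∀ j : ℕ, (π ^ j) u ≠ v := by
    intro j hj
    exact h ⟨(j : ℤ), by rw [zpow_natCast]; exact hj⟩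
  have key : ∀ j, j < n₀ → ((Equiv.swap u v * π) ^ j) u = (π ^ j) u := by
    intro j
    induction j with
    | zero => simp
    | succ k ih =>
      intro hk
      have hk' : k < n₀ := Nat.lt_of_succ_lt hk
      have h1 : ((Equiv.swap u v * π) ^ (k+1)) u
          = (Equiv.swap u v * π) (((Equiv.swap u v * π) ^ k) u) := by
        rw [pow_succ']; rfl
      have h2 : (π ^ (k+1)) u = π ((π ^ k) u) := by rw [pow_succ']; rfl
      rw [h1, ih hk', h2, Equiv.Perm.mul_apply,
        Equiv.swap_apply_of_ne_of_ne (by rw [← h2]; exact hmin _ (Nat.succ_pos k) hk)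
          (by rw [← h2]; exact hnotv (k+1))]
  have hfin : ((Equiv.swap u v * π) ^ n₀) u = v := by
    obtain ⟨n₁, hn₁⟩ : ∃ n₁, n₀ = n₁ + 1 := ⟨n₀ - 1, by omega⟩
    rw [hn₁]
    have h1 : ((Equiv.swap u v * π) ^ (n₁+1)) u
        = (Equiv.swap u v * π) (((Equiv.swap u v * π) ^ n₁) u) := by
      rw [pow_succ']; rfl
    rw [h1, key n₁ (by omega), Equiv.Perm.mul_apply]
    have h2 : π ((π ^ n₁) u) = u := by
      have h3 : (π ^ (n₁+1)) u = π ((π ^ n₁) u) := by rw [pow_succ']; rfl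
      rw [← h3, ← hn₁, hn₀eq]
    rw [h2, Equiv.swap_apply_left]
  exact ⟨(n₀ : ℤ), by rw [zpow_natCast]; exact hfin⟩

/-- Splitting: `u,v` on a common cycle end up on different cycles of `swap u v * π`. -/
theorem not_sameCycle_swap_mul (π : Equiv.Perm α) {u v : α} (huv : u ≠ v)
    (h : π.SameCycle u v) : ¬ (Equiv.swap u v * π).SameCycle u v := by
  classical
  letI : Fintype α := Fintype.ofFinite α
  obtain ⟨k0, hk0pos, -, hk0⟩ := h.exists_pow_eq''
  have hex : ∃ n, 0 < n ∧ (π ^ n) u = v := ⟨k0, hk0pos, hk0⟩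
  set k := Nat.find hex with hk
  have hkpos : 0 < k := (Nat.find_spec hex).1
  have hkeq : (π ^ k) u = v := (Nat.find_spec hex).2
  have hmin : ∀ j, 0 < j → j < k → (π ^ j) u ≠ v := fun j hj hjlt hju =>
    Nat.find_min hex hjlt ⟨hj, hju⟩
  have hnotu : ∀ j, 0 < j → j ≤ k → (π ^ j) u ≠ u := by
    intro j hj hjk hju
    have heq2 : v = (π ^ (k - j)) u := by
      have h4 : (π ^ (k - j + j)) u = (π ^ (k-j)) ((π ^ j) u) := by
        rw [pow_add]; rfl
      rw [hju] at h4
      conv_lhs => rw [← hkeq, ← Nat.sub_add_cancel hjk, h4]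
    rcases Nat.eq_zero_or_pos (k - j) with h0 | hpos
    · rw [h0] at heq2; simp at heq2; exact huv heq2.symm
    · exact hmin _ hpos (by omega) heq2.symm
  set S : Finset α := (Finset.range k).image (fun j => (π ^ j) u) with hS
  have huS : u ∈ S := by
    simp only [hS, Finset.mem_image]
    exact ⟨0, Finset.mem_range.2 hkpos, by simp⟩
  have hvS : v ∉ S := by
    simp only [hS, Finset.mem_image]
    rintro ⟨j, hj, hju⟩
    rw [Finset.mem_range] at hj
    rcases Nat.eq_zero_or_pos j with h0 | hpos
    · rw [h0] at hju; simp at hju; exact huv hju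
    · exact hmin j hpos hj hju
  have hclosed : ∀ z ∈ S, (Equiv.swap u v * π) z ∈ S := by
    intro z hz
    simp only [hS, Finset.mem_image, Finset.mem_range] at hz
    obtain ⟨j, hj, rfl⟩ := hz
    have happ : (Equiv.swap u v * π) ((π ^ j) u) = Equiv.swap u v ((π ^ (j+1)) u) := by
      rw [Equiv.Perm.mul_apply]
      congr 1
      rw [pow_succ']; rfl
    rcases eq_or_ne ((π ^ (j+1)) u) v with hv1 | hv1
    · rw [happ, hv1, Equiv.swap_apply_right]; exact huS
    · have hu1 : (π ^ (j+1)) u ≠ u := hnotu (j+1) (Nat.succ_pos j) (by omega)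
      rw [happ, Equiv.swap_apply_of_ne_of_ne hu1 hv1]
      have hj1 : j + 1 < k := by
        rcases Nat.lt_or_ge (j+1) k with h' | h'
        · exact h'
        · exfalso; have : j + 1 = k := by omega
          rw [this] at hv1; exact hv1 hkeq
      simp only [hS, Finset.mem_image, Finset.mem_range]
      exact ⟨j+1, hj1, rfl⟩
  have himg : S.image (Equiv.swap u v * π) = S := by
    apply Finset.eq_of_subset_of_card_le
    · intro z hz
      simp only [Finset.mem_image] at hz
      obtain ⟨w, hw, rfl⟩ := hz
      exact hclosed w hw
    · rw [Finset.card_image_of_injective _ (Equiv.injective _)]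
  have hinv : ∀ z ∈ S, (Equiv.swap u v * π)⁻¹ z ∈ S := by
    intro z hz
    rw [← himg] at hz
    simp only [Finset.mem_image] at hz
    obtain ⟨w, hw, rfl⟩ := hz
    rwa [show (Equiv.swap u v * π)⁻¹ ((Equiv.swap u v * π) w) = w from (Equiv.swap u v * π).symm_apply_apply w]
  have hzpow : ∀ i : ℤ, ((Equiv.swap u v * π) ^ i) u ∈ S := by
    intro i
    induction i using Int.induction_on with
    | zero => simpa using huS
    | succ n ih =>
      have : ((Equiv.swap u v * π) ^ ((n : ℤ) + 1)) u
          = (Equiv.swap u v * π) (((Equiv.swap u v * π) ^ (n : ℤ)) u) := by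
        rw [zpow_add_one]
        rw [show ((Equiv.swap u v * π) ^ (n:ℤ) * (Equiv.swap u v * π)) =
          ((Equiv.swap u v * π) * (Equiv.swap u v * π) ^ (n:ℤ)) from
          (Commute.refl _).zpow_right (n:ℤ) |>.symm.eq]
        rfl
      rw [this]; exact hclosed _ ih
    | pred n ih =>
      have : ((Equiv.swap u v * π) ^ (-(n : ℤ) - 1)) u
          = (Equiv.swap u v * π)⁻¹ (((Equiv.swap u v * π) ^ (-(n : ℤ))) u) := by
        rw [sub_eq_add_neg, add_comm, zpow_add]
        simp only [zpow_neg_one]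
        rfl
      rw [this]; exact hinv _ ih
  rintro ⟨i, hi⟩
  exact hvS (hi ▸ hzpow i)

/-- Splitting increases the number of cycles. -/
theorem numCycles_lt_swap_mul (π : Equiv.Perm α) {u v : α} (huv : u ≠ v)
    (h : π.SameCycle u v) : numCycles π < numCycles (Equiv.swap u v * π) := by
  have hle : cycleSetoid (Equiv.swap u v * π) ≤ cycleSetoid π := by
    intro x y hxy
    refine sameCycle_le_setoid (Equiv.swap u v * π) (cycleSetoid π) ?_ hxy
    intro z
    have hz : π.SameCycle z (π z) := ⟨1, by simp⟩
    rcases eq_or_ne (π z) u with h1 | h1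
    · have heq1 : (Equiv.swap u v * π) z = v := by
        rw [Equiv.Perm.mul_apply, h1, Equiv.swap_apply_left]
      rw [heq1]
      exact hz.trans (h1 ▸ h)
    rcases eq_or_ne (π z) v with h2 | h2
    · have heq1 : (Equiv.swap u v * π) z = u := by
        rw [Equiv.Perm.mul_apply, h2, Equiv.swap_apply_right]
      rw [heq1]
      exact hz.trans (h2 ▸ h.symm)
    · have heq1 : (Equiv.swap u v * π) z = π z := by
        rw [Equiv.Perm.mul_apply, Equiv.swap_apply_of_ne_of_ne h1 h2]
      rw [heq1]; exact hz
  exact card_quot_lt hle h (not_sameCycle_swap_mul π huv h)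

omit [Finite α] [DecidableEq α] in
theorem numCycles_one : numCycles (1 : Equiv.Perm α) = Nat.card α := by
  refine (Nat.card_eq_of_bijective (fun x => (Quotient.mk'' x : Quotient (cycleSetoid 1))) ?_).symm
  constructor
  · intro x y hxy
    have := Quotient.exact' hxy
    rwa [show (cycleSetoid (1 : Equiv.Perm α)) x y ↔ x = y from Equiv.Perm.sameCycle_one] at this
  · intro q
    obtain ⟨x, rfl⟩ := Quotient.exists_rep q
    exact ⟨x, rfl⟩

/-- The genus inequality. -/
theorem genus_le (f g : Equiv.Perm α) :
    numCycles f + numCycles g + numCycles (f⁻¹ * g)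
      ≤ Nat.card α + 2 * Nat.card (Quotient (cycleSetoid f ⊔ cycleSetoid g)) := by
  classical
  letI : Fintype α := Fintype.ofFinite α
  suffices H : ∀ (n : ℕ) (f : Equiv.Perm α), (f⁻¹ * g).support.card ≤ n →
      numCycles f + numCycles g + numCycles (f⁻¹ * g)
        ≤ Nat.card α + 2 * Nat.card (Quotient (cycleSetoid f ⊔ cycleSetoid g)) from
    H _ f le_rfl
  intro n
  induction n with
  | zero =>
    intro f hcard
    have hsupp : (f⁻¹ * g).support = ∅ := Finset.card_eq_zero.1 (Nat.le_zero.1 hcard)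
    have hfg : f = g := by
      have h1 : f⁻¹ * g = 1 := Equiv.Perm.support_eq_empty_iff.1 hsupp
      have h2 := congrArg (f * ·) h1
      simp only [← mul_assoc] at h2
      simpa [mul_assoc] using h2.symm
    subst hfg
    rw [sup_idem]
    have h1 : f⁻¹ * f = 1 := inv_mul_cancel f
    rw [h1, numCycles_one]
    have : Nat.card (Quotient (cycleSetoid f)) = numCycles f := rfl
    omega
  | succ n ih =>
    intro f hcard
    by_cases hfg : f = g
    · exact ih f (by subst hfg; simp [inv_mul_cancel, Equiv.Perm.support_one])
    obtain ⟨x, hx⟩ : ∃ x, f x ≠ g x := by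
      by_contra hall
      push_neg at hall
      exact hfg (Equiv.ext hall)
    set u : Equiv.Perm α := f⁻¹ * g with hu
    set t : Equiv.Perm α := Equiv.swap (f x) (g x) with ht
    set f' : Equiv.Perm α := t * f with hf'
    have hux : u x = f⁻¹ (g x) := rfl
    have huxne : u x ≠ x := by
      intro h'
      apply hx
      have h2 : f (u x) = f x := congrArg f h'
      rw [hux] at h2
      rw [show f (f⁻¹ (g x)) = g x from f.apply_symm_apply _] at h2
      exact h2.symm
    have hconj : f'⁻¹ * g = Equiv.swap x (u x) * u := by
      have h1 : Equiv.swap (f⁻¹ (f x)) (f⁻¹ (g x)) = f⁻¹ * Equiv.swap (f x) (g x) * f := by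
        rw [Equiv.swap_apply_apply]; simp [mul_assoc]
      rw [hf', mul_inv_rev, Equiv.swap_inv]
      have h2 : Equiv.swap x (u x) = f⁻¹ * t * f := by
        rw [hux, ← h1]; simp
      rw [h2, hu, ht]
      group
    have hsupp : (f'⁻¹ * g).support.card ≤ n := by
      rw [hconj]
      have hsub : (Equiv.swap x (u x) * u).support ⊆ u.support.erase x := by
        intro z hz
        rw [Equiv.Perm.mem_support] at hz
        rw [Finset.mem_erase, Equiv.Perm.mem_support]
        constructor
        · intro h'
          subst h'
          apply hz
          rw [Equiv.Perm.mul_apply, Equiv.swap_apply_right]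
        · intro h'
          apply hz
          have hz1 : z ≠ x := by
            intro h''; subst h''
            apply hz; rw [Equiv.Perm.mul_apply, Equiv.swap_apply_right]
          have hz2 : z ≠ u x := by
            intro h''
            rw [h''] at h'
            exact huxne (u.injective h')
          rw [Equiv.Perm.mul_apply, h', Equiv.swap_apply_of_ne_of_ne hz1 hz2]
      have hxs : x ∈ u.support := by
        rw [Equiv.Perm.mem_support]; exact huxne
      have := Finset.card_le_card hsub
      have h2 := Finset.card_erase_of_mem hxs
      have hpos : 0 < u.support.card := Finset.card_pos.2 ⟨x, hxs⟩
      omega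
    have hIH := ih f' hsupp
    have hsplit : numCycles u + 1 ≤ numCycles (f'⁻¹ * g) := by
      rw [hconj]
      exact numCycles_lt_swap_mul u (Ne.symm huxne) ⟨1, by simp⟩
    set K := cycleSetoid f ⊔ cycleSetoid g with hK
    set K' := cycleSetoid f' ⊔ cycleSetoid g with hK'
    have hK'leK : K' ≤ K := by
      rw [hK', hK]
      apply sup_le _ le_sup_right
      intro z w hzw
      refine sameCycle_le_setoid f' (cycleSetoid f ⊔ cycleSetoid g) ?_ hzw
      intro z
      have hfz : (cycleSetoid f ⊔ cycleSetoid g) z (f z) :=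
        le_sup_left (α := Setoid α) (⟨1, by simp⟩ : f.SameCycle z (f z))
      have happ : f' z = t (f z) := rfl
      rcases eq_or_ne (f z) (f x) with h1 | h1
      · have hzx : z = x := f.injective h1
        subst hzx
        have : f' z = g z := by rw [happ, h1, ht, Equiv.swap_apply_left]
        rw [this]
        exact le_sup_right (α := Setoid α) (⟨1, by simp⟩ : g.SameCycle z (g z))
      rcases eq_or_ne (f z) (g x) with h2 | h2
      · have : f' z = f x := by rw [happ, h2, ht, Equiv.swap_apply_right]
        rw [this]
        have e1 : (cycleSetoid f ⊔ cycleSetoid g) z (g x) := h2 ▸ hfz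
        have e2 : (cycleSetoid f ⊔ cycleSetoid g) (g x) x :=
          Setoid.symm' _ (le_sup_right (α := Setoid α) (⟨1, by simp⟩ : g.SameCycle x (g x)))
        have e3 : (cycleSetoid f ⊔ cycleSetoid g) x (f x) :=
          le_sup_left (α := Setoid α) (⟨1, by simp⟩ : f.SameCycle x (f x))
        exact Setoid.trans' _ (Setoid.trans' _ e1 e2) e3
      · have : f' z = f z := by rw [happ, ht, Equiv.swap_apply_of_ne_of_ne h1 h2]
        rw [this]; exact hfz
    have hkk' : Nat.card (Quotient K) ≤ Nat.card (Quotient K') := card_quot_le_of_le hK'leK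
    by_cases hc : f.SameCycle (f x) (g x)
    · have hf'count : numCycles f + 1 ≤ numCycles f' := numCycles_lt_swap_mul f hx hc
      have hkbound : Nat.card (Quotient K') ≤ Nat.card (Quotient K) + 1 := by
        have h1 : K ≤ pairJoin K' (f x) (g x) := by
          rw [hK]
          apply sup_le
          · intro z w hzw
            refine sameCycle_le_setoid f (pairJoin K' (f x) (g x)) ?_ hzw
            intro z
            have hf'z : K' z (f' z) :=
              le_sup_left (α := Setoid α) (⟨1, by simp⟩ : f'.SameCycle z (f' z))
            have happ : f z = t (f' z) := by
              simp only [hf', ht, Equiv.Perm.mul_apply, Equiv.swap_apply_self]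
            rcases eq_or_ne (f' z) (f x) with h1 | h1
            · have : f z = g x := by rw [happ, h1, ht, Equiv.swap_apply_left]
              rw [this, pairJoin_rel]
              exact Or.inr (Or.inl ⟨h1 ▸ hf'z, Setoid.refl' _ _⟩)
            rcases eq_or_ne (f' z) (g x) with h2 | h2
            · have : f z = f x := by rw [happ, h2, ht, Equiv.swap_apply_right]
              rw [this, pairJoin_rel]
              exact Or.inr (Or.inr ⟨h2 ▸ hf'z, Setoid.refl' _ _⟩)
            · have : f z = f' z := by rw [happ, ht, Equiv.swap_apply_of_ne_of_ne h1 h2]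
              rw [this, pairJoin_rel]
              exact Or.inl hf'z
          · exact le_trans le_sup_right (le_pairJoin K' (f x) (g x))
        calc Nat.card (Quotient K') ≤ Nat.card (Quotient (pairJoin K' (f x) (g x))) + 1 :=
              card_quot_le_pairJoin K' (f x) (g x)
          _ ≤ Nat.card (Quotient K) + 1 := by
              have := card_quot_le_of_le h1
              omega
      omega
    · have hf'count : numCycles f ≤ numCycles f' + 1 := le_numCycles_swap_mul f (f x) (g x)
      have hKleK' : K ≤ K' := by
        rw [hK]
        apply sup_le _ le_sup_right
        intro z w hzw
        refine sameCycle_le_setoid f K' ?_ hzw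
        intro z
        have hf'z : K' z (f' z) :=
          le_sup_left (α := Setoid α) (⟨1, by simp⟩ : f'.SameCycle z (f' z))
        have hmerge : K' (f x) (g x) :=
          le_sup_left (α := Setoid α) (sameCycle_swap_mul_of_not_sameCycle f hc)
        have happ : f z = t (f' z) := by
          simp only [hf', ht, Equiv.Perm.mul_apply, Equiv.swap_apply_self]
        rcases eq_or_ne (f' z) (f x) with h1 | h1
        · have : f z = g x := by rw [happ, h1, ht, Equiv.swap_apply_left]
          rw [this]
          exact Setoid.trans' _ (h1 ▸ hf'z) hmerge
        rcases eq_or_ne (f' z) (g x) with h2 | h2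
        · have : f z = f x := by rw [happ, h2, ht, Equiv.swap_apply_right]
          rw [this]
          exact Setoid.trans' _ (h2 ▸ hf'z) (Setoid.symm' _ hmerge)
        · have : f z = f' z := by rw [happ, ht, Equiv.swap_apply_of_ne_of_ne h1 h2]
          rw [this]; exact hf'z
      have : Nat.card (Quotient K') ≤ Nat.card (Quotient K) := card_quot_le_of_le hKleK'
      omega

omit [DecidableEq α] in
/-- A cycle stays within an invariant set. -/
theorem sameCycle_mem_iff (f : Equiv.Perm α) {p : α → Prop} (hp : ∀ x, p x ↔ p (f x))
    {x y : α} (h : f.SameCycle x y) : p x ↔ p y := by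
  obtain ⟨n, -, -, rfl⟩ := h.exists_pow_eq''
  clear h
  induction n with
  | zero => simp
  | succ n ih =>
    have : (f ^ (n + 1)) x = f ((f ^ n) x) := by rw [pow_succ']; rfl
    rw [this]
    exact ih.trans (hp _)

omit [DecidableEq α] in
theorem numCycles_subtype_add (f : Equiv.Perm α) (p q : α → Prop)
    (hp : ∀ x, p x ↔ p (f x)) (hq : ∀ x, q x ↔ q (f x))
    (hpq : ∀ x, q x ↔ ¬ p x) :
    numCycles f = numCycles (f.subtypePerm (p := p) (fun x => (hp x).symm)) + numCycles (f.subtypePerm (p := q) (fun x => (hq x).symm)) := by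
  classical
  have hwdp : ∀ (z w : {x // p x}), (cycleSetoid (f.subtypePerm (p := p) (fun x => (hp x).symm))) z w →
      (Quotient.mk'' z.1 : Quotient (cycleSetoid f)) = Quotient.mk'' w.1 := by
    intro z w hzw
    exact Quotient.sound' (Equiv.Perm.sameCycle_subtypePerm.1 hzw)
  have hwdq : ∀ (z w : {x // q x}), (cycleSetoid (f.subtypePerm (p := q) (fun x => (hq x).symm))) z w →
      (Quotient.mk'' z.1 : Quotient (cycleSetoid f)) = Quotient.mk'' w.1 := by
    intro z w hzw
    exact Quotient.sound' (Equiv.Perm.sameCycle_subtypePerm.1 hzw)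
  set e : Quotient (cycleSetoid (f.subtypePerm (p := p) (fun x => (hp x).symm))) ⊕ Quotient (cycleSetoid (f.subtypePerm (p := q) (fun x => (hq x).symm))) →
      Quotient (cycleSetoid f) :=
    Sum.elim (Quotient.lift (fun z => Quotient.mk'' z.1) hwdp)
      (Quotient.lift (fun z => Quotient.mk'' z.1) hwdq) with he
  have hbij : Function.Bijective e := by
    constructor
    · rintro (q1 | q1) (q2 | q2) heq <;>
        obtain ⟨z1, rfl⟩ := Quotient.exists_rep q1 <;>
        obtain ⟨z2, rfl⟩ := Quotient.exists_rep q2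
      · have h12 : f.SameCycle z1.1 z2.1 := Quotient.exact' heq
        exact congrArg Sum.inl (Quotient.sound' (Equiv.Perm.sameCycle_subtypePerm.2 h12))
      · have h12 : f.SameCycle z1.1 z2.1 := Quotient.exact' heq
        exact absurd (((sameCycle_mem_iff f hp h12).1 z1.2)) ((hpq z2.1).1 z2.2)
      · have h12 : f.SameCycle z1.1 z2.1 := Quotient.exact' heq
        exact absurd (((sameCycle_mem_iff f hp h12.symm).1 z2.2)) ((hpq z1.1).1 z1.2)
      · have h12 : f.SameCycle z1.1 z2.1 := Quotient.exact' heq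
        exact congrArg Sum.inr (Quotient.sound' (Equiv.Perm.sameCycle_subtypePerm.2 h12))
    · intro q1
      obtain ⟨z, rfl⟩ := Quotient.exists_rep q1
      by_cases hz : p z
      · exact ⟨Sum.inl (Quotient.mk'' ⟨z, hz⟩), rfl⟩
      · exact ⟨Sum.inr (Quotient.mk'' ⟨z, (hpq z).2 hz⟩), rfl⟩
  have hcard := Nat.card_eq_of_bijective e hbij
  rw [Nat.card_sum] at hcard
  exact hcard.symm

omit [DecidableEq α] in
theorem card_subtype_add (p q : α → Prop) (hpq : ∀ x, q x ↔ ¬ p x) :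
    Nat.card α = Nat.card {x // p x} + Nat.card {x // q x} := by
  classical
  set e : {x // p x} ⊕ {x // q x} → α := Sum.elim Subtype.val Subtype.val with he
  have hbij : Function.Bijective e := by
    constructor
    · rintro (z1 | z1) (z2 | z2) heq
      · exact congrArg Sum.inl (Subtype.ext heq)
      · exact absurd ((show z1.1 = z2.1 from heq) ▸ z1.2) ((hpq z2.1).1 z2.2)
      · exact absurd ((show z1.1 = z2.1 from heq).symm ▸ z2.2) ((hpq z1.1).1 z1.2)
      · exact congrArg Sum.inr (Subtype.ext heq)
    · intro x
      by_cases hx : p x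
      · exact ⟨Sum.inl ⟨x, hx⟩, rfl⟩
      · exact ⟨Sum.inr ⟨x, (hpq x).2 hx⟩, rfl⟩
  have := Nat.card_eq_of_bijective e hbij
  rw [Nat.card_sum] at this
  exact this.symm

omit [DecidableEq α] in
/-- Transfer connectivity to an invariant subset. -/
theorem join_restrict_eq_top (f g : Equiv.Perm α) (p : α → Prop)
    (hpf : ∀ x, p x ↔ p (f x)) (hpg : ∀ x, p x ↔ p (g x))
    (hconn : ∀ x y : α, p x → p y → (cycleSetoid f ⊔ cycleSetoid g) x y) :
    cycleSetoid (f.subtypePerm (p := p) (fun x => (hpf x).symm)) ⊔ cycleSetoid (g.subtypePerm (p := p) (fun x => (hpg x).symm)) = ⊤ := by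
  rw [Setoid.eq_top_iff]
  intro x y
  have h := hconn x.1 y.1 x.2 y.2
  rw [Setoid.sup_eq_eqvGen] at h ⊢
  have hpres2 : ∀ u v : α,
      Relation.EqvGen (fun a b => (cycleSetoid f) a b ∨ (cycleSetoid g) a b) u v →
      (p u ↔ p v) := by
    intro u v h'
    induction h' with
    | rel u v h'' =>
      rcases h'' with h'' | h''
      · exact sameCycle_mem_iff f hpf h''
      · exact sameCycle_mem_iff g hpg h''
    | refl => exact Iff.rfl
    | symm _ _ _ ih => exact ih.symm
    | trans _ _ _ _ _ ih1 ih2 => exact ih1.trans ih2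
  have main : ∀ u v : α,
      Relation.EqvGen (fun a b => (cycleSetoid f) a b ∨ (cycleSetoid g) a b) u v →
      ∀ (hu : p u) (hv : p v),
        Relation.EqvGen (fun a b => (cycleSetoid (f.subtypePerm (p := p) (fun x => (hpf x).symm))) a b ∨
          (cycleSetoid (g.subtypePerm (p := p) (fun x => (hpg x).symm))) a b) ⟨u, hu⟩ ⟨v, hv⟩ := by
    intro u v h'
    induction h' with
    | rel u v h'' =>
      intro hu hv
      apply Relation.EqvGen.rel
      rcases h'' with h'' | h''
      · exact Or.inl (Equiv.Perm.sameCycle_subtypePerm.2 h'')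
      · exact Or.inr (Equiv.Perm.sameCycle_subtypePerm.2 h'')
    | refl u => intro hu hv; exact Relation.EqvGen.refl _
    | symm u v _ ih => intro hu hv; exact Relation.EqvGen.symm _ _ (ih hv hu)
    | trans u v w huv hvw ih1 ih2 =>
      intro hu hw
      have hv : p v := (hpres2 u v huv).1 hu
      exact Relation.EqvGen.trans _ _ _ (ih1 hu hv) (ih2 hv hw)
  exact main x.1 y.1 h x.2 y.2

omit [DecidableEq α] in
/-- Induction along a cycle. -/
theorem cycle_induction (τ : Equiv.Perm α) (P : α → Prop) (a : α) (ha : P a)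
    (hstep : ∀ z, τ.SameCycle a z → P z → P (τ z)) :
    ∀ z, τ.SameCycle a z → P z := by
  intro z hz
  obtain ⟨n, -, -, rfl⟩ := hz.exists_pow_eq''
  clear hz
  induction n with
  | zero => simpa using ha
  | succ n ih =>
    have : (τ ^ (n + 1)) a = τ ((τ ^ n) a) := by rw [pow_succ']; rfl
    rw [this]
    exact hstep _ ⟨n, by rw [zpow_natCast]⟩ ih

omit [DecidableEq α] in
/-- Two permutations agreeing on the cycle of `x` have the same cycles through `x`. -/
theorem sameCycle_congr {π π' : Equiv.Perm α} {x : α}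
    (heq : ∀ w, π.SameCycle x w → π w = π' w) (y : α) :
    π.SameCycle x y ↔ π'.SameCycle x y := by
  have key : ∀ n : ℕ, (π' ^ n) x = (π ^ n) x := by
    intro n
    induction n with
    | zero => rfl
    | succ n ih =>
      have h1 : (π' ^ (n + 1)) x = π' ((π' ^ n) x) := by rw [pow_succ']; rfl
      have h2 : (π ^ (n + 1)) x = π ((π ^ n) x) := by rw [pow_succ']; rfl
      rw [h1, h2, ih, ← heq _ ⟨n, by rw [zpow_natCast]⟩]
  constructor
  · intro h
    obtain ⟨n, -, -, rfl⟩ := h.exists_pow_eq''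
    exact ⟨n, by rw [zpow_natCast, key]⟩
  · intro h
    obtain ⟨n, -, -, rfl⟩ := h.exists_pow_eq''
    exact ⟨n, by rw [zpow_natCast, key]⟩

omit [DecidableEq α] in
/-- For an involution, cycles are pairs. -/
theorem involution_sameCycle {σ : Equiv.Perm α} (hinv : σ * σ = 1) {u v : α}
    (h : σ.SameCycle u v) : v = u ∨ v = σ u := by
  obtain ⟨n, -, -, rfl⟩ := h.exists_pow_eq''
  clear h
  induction n with
  | zero => exact Or.inl rfl
  | succ n ih =>
    have h1 : (σ ^ (n + 1)) u = σ ((σ ^ n) u) := by rw [pow_succ']; rfl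
    rcases ih with h | h
    · exact Or.inr (by rw [h1, h])
    · refine Or.inl ?_
      rw [h1, h]
      have := congrArg (fun τ : Equiv.Perm α => τ u) hinv
      simpa using this

end SwitchAux

/-- The switch lemma.  Let `σ ∈ NC₂(m_1,…,m_r)` and let `(a,b)`, `(c,d)`
(`b = σ a`, `d = σ c`) be through strings of `σ` such that, in the quotient
graph of `T` by the cycles of `γσ`, the edges `e_a` and `e_c` connect the
same ordered pair of distinct vertices.  Let
`σ^switch = σ·(a,b)(c,d)(a,d)(b,c)`.  Then:
(i) `γ ∨ σ^switch` has exactly two blocks `A` and `B`, with `{a,d} ⊆ A` and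
`{b,c} ⊆ B`;
(ii) the restrictions of `σ^switch` to `A` and `B` are non-crossing pairings
relative to the restrictions of `γ`;
(iii) the cycle partition of `γσ` restricted to `A` equals that of
`γ|_A σ^switch|_A`, and similarly for `B`. -/
theorem switch_lemma (r : ℕ) (m : Fin r → ℕ)
    (σ : Equiv.Perm (annIndex r m))
    (hfix : ∀ x, σ x ≠ x) (hinv : σ * σ = 1)
    (hjoin : cycleSetoid σ ⊔ cycleSetoid (gammaAnn r m) = ⊤)
    (hcnt : numCycles σ + numCycles (gammaAnn r m) +
        numCycles (σ⁻¹ * gammaAnn r m) = Nat.card (annIndex r m) + 2)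
    (a c : annIndex r m)
    (hta : ¬ (gammaAnn r m).SameCycle a (σ a))
    (htc : ¬ (gammaAnn r m).SameCycle c (σ c))
    (hac : a ≠ c) (had : a ≠ σ c)
    (hsame₁ : (gammaAnn r m * σ).SameCycle (gammaAnn r m a) (gammaAnn r m c))
    (hsame₂ : (gammaAnn r m * σ).SameCycle a c)
    (hdistv : ¬ (gammaAnn r m * σ).SameCycle (gammaAnn r m a) a) :
    let γ := gammaAnn r m
    let σsw := σ * Equiv.swap a (σ a) * Equiv.swap c (σ c) *
      Equiv.swap a (σ c) * Equiv.swap (σ a) c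
    let J := cycleSetoid γ ⊔ cycleSetoid σsw
    (Nat.card (Quotient J) = 2 ∧ J a (σ c) ∧ J (σ a) c ∧ ¬ J a (σ a)) ∧
    ∃ (hsA : ∀ x, J x a ↔ J (σsw x) a) (hgA : ∀ x, J x a ↔ J (γ x) a)
      (hsB : ∀ x, J x (σ a) ↔ J (σsw x) (σ a))
      (hgB : ∀ x, J x (σ a) ↔ J (γ x) (σ a)),
      (cycleSetoid (σsw.subtypePerm (p := fun x => J x a) (fun x => (hsA x).symm)) ⊔ cycleSetoid (γ.subtypePerm (p := fun x => J x a) (fun x => (hgA x).symm)) = ⊤ ∧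
        numCycles (σsw.subtypePerm (p := fun x => J x a) (fun x => (hsA x).symm)) + numCycles (γ.subtypePerm (p := fun x => J x a) (fun x => (hgA x).symm)) +
            numCycles ((σsw.subtypePerm (p := fun x => J x a) (fun x => (hsA x).symm))⁻¹ * γ.subtypePerm (p := fun x => J x a) (fun x => (hgA x).symm)) =
          Nat.card {x // J x a} + 2) ∧
      (cycleSetoid (σsw.subtypePerm (p := fun x => J x (σ a)) (fun x => (hsB x).symm)) ⊔ cycleSetoid (γ.subtypePerm (p := fun x => J x (σ a)) (fun x => (hgB x).symm)) = ⊤ ∧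
        numCycles (σsw.subtypePerm (p := fun x => J x (σ a)) (fun x => (hsB x).symm)) + numCycles (γ.subtypePerm (p := fun x => J x (σ a)) (fun x => (hgB x).symm)) +
            numCycles ((σsw.subtypePerm (p := fun x => J x (σ a)) (fun x => (hsB x).symm))⁻¹ * γ.subtypePerm (p := fun x => J x (σ a)) (fun x => (hgB x).symm)) =
          Nat.card {x // J x (σ a)} + 2) ∧
      (∀ x y : {x // J x a}, (γ * σ).SameCycle x.1 y.1 ↔
        (γ.subtypePerm (p := fun x => J x a) (fun x => (hgA x).symm) * σsw.subtypePerm (p := fun x => J x a) (fun x => (hsA x).symm)).SameCycle x y) ∧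
      (∀ x y : {x // J x (σ a)}, (γ * σ).SameCycle x.1 y.1 ↔
        (γ.subtypePerm (p := fun x => J x (σ a)) (fun x => (hgB x).symm) * σsw.subtypePerm (p := fun x => J x (σ a)) (fun x => (hsB x).symm)).SameCycle x y) := by
  intro γ σsw J
  classical
  rw [show gammaAnn r m = γ from rfl] at hsame₁ hsame₂ hdistv hjoin hcnt hta htc
  have hσswdef : σsw = σ * Equiv.swap a (σ a) * Equiv.swap c (σ c) *
      Equiv.swap a (σ c) * Equiv.swap (σ a) c := rfl
  have hσσ : ∀ x, σ (σ x) = x := fun x => by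
    have := Equiv.ext_iff.mp hinv x
    simpa using this
  have hσinv : σ⁻¹ = σ := inv_eq_of_mul_eq_one_right hinv
  have hab : a ≠ σ a := fun h => hfix a h.symm
  have hcd : c ≠ σ c := fun h => hfix c h.symm
  have hbc : σ a ≠ c := by
    intro h
    apply had
    rw [← h, hσσ]
  have hbd : σ a ≠ σ c := fun h => hac (σ.injective h)
  have hda : σ c ≠ a := fun h => had h.symm
  have hσsw : σsw = σ * Equiv.swap a c * Equiv.swap (σ a) (σ c) := by
    rw [hσswdef]
    ext x
    simp only [Equiv.Perm.mul_apply]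
    congr 1
    by_cases h1 : x = a
    · subst h1
      simp [Equiv.swap_apply_def, hab, hac, had, hbc, hbd, hcd,
        Ne.symm hab, Ne.symm hac, Ne.symm had, Ne.symm hbc, Ne.symm hbd, Ne.symm hcd]
    by_cases h2 : x = σ a
    · subst h2
      simp [Equiv.swap_apply_def, hab, hac, had, hbc, hbd, hcd,
        Ne.symm hab, Ne.symm hac, Ne.symm had, Ne.symm hbc, Ne.symm hbd, Ne.symm hcd]
    by_cases h3 : x = c
    · subst h3
      simp [Equiv.swap_apply_def, hab, hac, had, hbc, hbd, hcd,
        Ne.symm hab, Ne.symm hac, Ne.symm had, Ne.symm hbc, Ne.symm hbd, Ne.symm hcd]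
    by_cases h4 : x = σ c
    · subst h4
      simp [Equiv.swap_apply_def, hab, hac, had, hbc, hbd, hcd,
        Ne.symm hab, Ne.symm hac, Ne.symm had, Ne.symm hbc, Ne.symm hbd, Ne.symm hcd]
    · simp [Equiv.swap_apply_def, h1, h2, h3, h4]
  -- pointwise values
  have hswa : σsw a = σ c := by
    rw [hσsw]
    simp [Equiv.Perm.mul_apply, Equiv.swap_apply_def, hσσ, hab, hac, had, hbc, hbd, hcd, hda,
      Ne.symm hab, Ne.symm hac, Ne.symm had, Ne.symm hbc, Ne.symm hbd, Ne.symm hcd]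
  have hswb : σsw (σ a) = c := by
    rw [hσsw]
    simp [Equiv.Perm.mul_apply, Equiv.swap_apply_def, hσσ, hab, hac, had, hbc, hbd, hcd, hda,
      Ne.symm hab, Ne.symm hac, Ne.symm had, Ne.symm hbc, Ne.symm hbd, Ne.symm hcd]
  have hswc : σsw c = σ a := by
    rw [hσsw]
    simp [Equiv.Perm.mul_apply, Equiv.swap_apply_def, hσσ, hab, hac, had, hbc, hbd, hcd, hda,
      Ne.symm hab, Ne.symm hac, Ne.symm had, Ne.symm hbc, Ne.symm hbd, Ne.symm hcd]
  have hswd : σsw (σ c) = a := by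
    rw [hσsw]
    simp [Equiv.Perm.mul_apply, Equiv.swap_apply_def, hσσ, hab, hac, had, hbc, hbd, hcd, hda,
      Ne.symm hab, Ne.symm hac, Ne.symm had, Ne.symm hbc, Ne.symm hbd, Ne.symm hcd]
  have hswother : ∀ x, x ≠ a → x ≠ σ a → x ≠ c → x ≠ σ c → σsw x = σ x := by
    intro x k1 k2 k3 k4
    rw [hσsw]
    simp [Equiv.Perm.mul_apply, Equiv.swap_apply_def, k1, k2, k3, k4]
  -- J facts
  have hJγle : ∀ {x y}, γ.SameCycle x y → J x y :=
    fun h => Setoid.le_def.mp le_sup_left h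
  have hJσswle : ∀ {x y}, σsw.SameCycle x y → J x y :=
    fun h => Setoid.le_def.mp le_sup_right h
  have hJγstep : ∀ x, J x (γ x) := fun x => hJγle (⟨1, by simp⟩ : γ.SameCycle x (γ x))
  have hJσswstep : ∀ x, J x (σsw x) := fun x => hJσswle (⟨1, by simp⟩ : σsw.SameCycle x (σsw x))
  have hJad : J a (σ c) := hswa ▸ hJσswstep a
  have hJbc : J (σ a) c := by
    have := hJσswstep (σ a); rwa [hswb] at this
  have hJda : J (σ c) a := by
    have := hJσswstep (σ c); rwa [hswd] at this
  have hJcb : J c (σ a) := by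
    have := hJσswstep c; rwa [hswc] at this
  -- coverage: every point lies in the class of a or of σ a
  have hQσ : ∀ u, (J u a ∨ J u (σ a)) → (J (σ u) a ∨ J (σ u) (σ a)) := by
    intro u hu
    by_cases h1 : u = a
    · subst h1; exact Or.inr (J.refl' _)
    by_cases h2 : u = σ a
    · subst h2; rw [hσσ]; exact Or.inl (J.refl' _)
    by_cases h3 : u = c
    · subst h3; exact Or.inl hJda
    by_cases h4 : u = σ c
    · subst h4; rw [hσσ]; exact Or.inr hJcb
    · have hstep : J u (σ u) := by
        have := hJσswstep u
        rwa [hswother u h1 h2 h3 h4] at this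
      rcases hu with h | h
      · exact Or.inl (J.trans' (J.symm' hstep) h)
      · exact Or.inr (J.trans' (J.symm' hstep) h)
  have hQσ' : ∀ u, (J (σ u) a ∨ J (σ u) (σ a)) → (J u a ∨ J u (σ a)) := by
    intro u h
    have := hQσ (σ u)
    rw [hσσ] at this
    exact this h
  have hcover : ∀ x, J x a ∨ J x (σ a) := by
    intro x
    have hx : (cycleSetoid σ ⊔ cycleSetoid γ) x a := by
      rw [hjoin]
      trivial
    rw [Setoid.sup_eq_eqvGen] at hx
    have main : ∀ u v, Relation.EqvGen (fun p q => (cycleSetoid σ) p q ∨ (cycleSetoid γ) p q) u v →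
        ((J u a ∨ J u (σ a)) ↔ (J v a ∨ J v (σ a))) := by
      intro u v h
      induction h with
      | rel u v h' =>
        rcases h' with h' | h'
        · rcases involution_sameCycle hinv h' with rfl | rfl
          · exact Iff.rfl
          · exact ⟨hQσ u, hQσ' u⟩
        · have hJuv : J u v := hJγle h'
          constructor <;> intro hh <;> rcases hh with hh | hh
          · exact Or.inl (J.trans' (J.symm' hJuv) hh)
          · exact Or.inr (J.trans' (J.symm' hJuv) hh)
          · exact Or.inl (J.trans' hJuv hh)
          · exact Or.inr (J.trans' hJuv hh)
      | refl u => exact Iff.rfl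
      | symm u v _ ih => exact ih.symm
      | trans u v w _ _ ih1 ih2 => exact ih1.trans ih2
    exact (main x a hx).2 (Or.inl (J.refl' a))
  -- lower bound for numCycles σsw
  have hform : σsw = Equiv.swap (σ a) (σ c) * (Equiv.swap a c * σ) := by
    have e1 : σ * Equiv.swap a c = Equiv.swap (σ a) (σ c) * σ :=
      Equiv.mul_swap_eq_swap_mul σ a c
    have e2 : σ * Equiv.swap (σ a) (σ c) = Equiv.swap (σ (σ a)) (σ (σ c)) * σ :=
      Equiv.mul_swap_eq_swap_mul σ (σ a) (σ c)
    rw [hσσ, hσσ] at e2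
    calc σsw = σ * Equiv.swap a c * Equiv.swap (σ a) (σ c) := hσsw
      _ = Equiv.swap (σ a) (σ c) * σ * Equiv.swap (σ a) (σ c) := by rw [e1]
      _ = Equiv.swap (σ a) (σ c) * (σ * Equiv.swap (σ a) (σ c)) := by rw [mul_assoc]
      _ = Equiv.swap (σ a) (σ c) * (Equiv.swap a c * σ) := by rw [e2]
  have hsc_ac : (Equiv.swap a c * σ).SameCycle (σ a) (σ c) := by
    have s1 : (Equiv.swap a c * σ) (σ a) = c := by
      rw [Equiv.Perm.mul_apply, hσσ, Equiv.swap_apply_left]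
    have s2 : (Equiv.swap a c * σ) c = σ c := by
      rw [Equiv.Perm.mul_apply, Equiv.swap_apply_of_ne_of_ne hda (Ne.symm hcd)]
    refine ⟨2, ?_⟩
    rw [show (2:ℤ) = 1 + 1 from rfl, zpow_add, zpow_one, Equiv.Perm.mul_apply, s1, s2]
  have hswK : numCycles σ ≤ numCycles σsw := by
    have h1 : numCycles σ ≤ numCycles (Equiv.swap a c * σ) + 1 := le_numCycles_swap_mul σ a c
    have h2 : numCycles (Equiv.swap a c * σ) < numCycles σsw := by
      rw [hform]
      exact numCycles_lt_swap_mul _ hbd hsc_ac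
    omega
  -- facts about τ = γ * σ
  have hτb : (γ * σ) (σ a) = γ a := by
    rw [Equiv.Perm.mul_apply, hσσ]
  have hτd : (γ * σ) (σ c) = γ c := by
    rw [Equiv.Perm.mul_apply, hσσ]
  have hcyc_b_γa : (γ * σ).SameCycle (σ a) (γ a) := ⟨1, by rw [zpow_one]; exact hτb⟩
  have hcyc_d_γc : (γ * σ).SameCycle (σ c) (γ c) := ⟨1, by rw [zpow_one]; exact hτd⟩
  have hbd_cyc : (γ * σ).SameCycle (σ a) (σ c) :=
    (hcyc_b_γa.trans hsame₁).trans hcyc_d_γc.symm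
  have hnab : ¬ (γ * σ).SameCycle a (σ a) := fun h =>
    hdistv ((h.trans hcyc_b_γa).symm)
  have hnad : ¬ (γ * σ).SameCycle a (σ c) := fun h =>
    hdistv ((h.trans (hcyc_d_γc.trans hsame₁.symm)).symm)
  -- lower bound for numCycles (σsw⁻¹ * γ)
  have hπ₁eq : σ⁻¹ * γ = σ⁻¹ * (γ * σ) * (σ⁻¹)⁻¹ := by
    rw [inv_inv, mul_assoc, mul_assoc, hinv, mul_one]
  have hπ₁same : ∀ x y, (σ⁻¹ * γ).SameCycle x y ↔ (γ * σ).SameCycle (σ x) (σ y) := by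
    intro x y
    rw [hπ₁eq, Equiv.Perm.sameCycle_conj, inv_inv]
  have hsc1 : (σ⁻¹ * γ).SameCycle a c := by
    rw [hπ₁same]
    exact hbd_cyc
  have hbdπ₁ : (σ⁻¹ * γ).SameCycle (σ a) (σ c) := by
    rw [hπ₁same, hσσ, hσσ]
    exact hsame₂
  have hsc2 : (Equiv.swap a c * (σ⁻¹ * γ)).SameCycle (σ a) (σ c) := by
    refine (sameCycle_congr ?_ (σ c)).1 hbdπ₁
    intro w hw
    have hw1 : (σ⁻¹ * γ) w ≠ a := by
      intro h
      have : (σ⁻¹ * γ).SameCycle (σ a) a := hw.trans (h ▸ ⟨1, by rw [zpow_one]⟩)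
      rw [hπ₁same, hσσ] at this
      exact hnab this
    have hw2 : (σ⁻¹ * γ) w ≠ c := by
      intro h
      have : (σ⁻¹ * γ).SameCycle (σ a) c := hw.trans (h ▸ ⟨1, by rw [zpow_one]⟩)
      rw [hπ₁same, hσσ] at this
      exact hnad this
    show (σ⁻¹ * γ) w = Equiv.swap a c ((σ⁻¹ * γ) w)
    rw [Equiv.swap_apply_of_ne_of_ne hw1 hw2]
  have hforminv : σsw⁻¹ * γ = Equiv.swap (σ a) (σ c) * (Equiv.swap a c * (σ⁻¹ * γ)) := by
    rw [hσsw, mul_inv_rev, mul_inv_rev, Equiv.swap_inv, Equiv.swap_inv]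
    group
  have hswγK : numCycles (σ⁻¹ * γ) + 2 ≤ numCycles (σsw⁻¹ * γ) := by
    have h1 : numCycles (σ⁻¹ * γ) < numCycles (Equiv.swap a c * (σ⁻¹ * γ)) :=
      numCycles_lt_swap_mul _ hac hsc1
    have h2 : numCycles (Equiv.swap a c * (σ⁻¹ * γ)) <
        numCycles (Equiv.swap (σ a) (σ c) * (Equiv.swap a c * (σ⁻¹ * γ))) :=
      numCycles_lt_swap_mul _ hbd hsc2
    rw [hforminv]
    omega
  -- the two classes are distinct
  have hcnt' : numCycles σ + numCycles γ + numCycles (σ⁻¹ * γ)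
      = Nat.card (annIndex r m) + 2 := hcnt
  have hnJab : ¬ J a (σ a) := by
    intro hJab
    have hall : ∀ x, J x a := fun x =>
      (hcover x).elim id (fun h => J.trans' h (J.symm' hJab))
    have hone : Nat.card (Quotient J) = 1 := by
      rw [Nat.card_eq_one_iff_unique]
      constructor
      · constructor
        intro q1 q2
        obtain ⟨z1, rfl⟩ := Quotient.exists_rep q1
        obtain ⟨z2, rfl⟩ := Quotient.exists_rep q2
        exact Quotient.sound' (J.trans' (hall z1) (J.symm' (hall z2)))
      · exact ⟨Quotient.mk'' a⟩
    have hgen := genus_le σsw γ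
    rw [show cycleSetoid σsw ⊔ cycleSetoid γ = J from sup_comm _ _, hone] at hgen
    omega
  have hcard2 : Nat.card (Quotient J) = 2 := by
    have hle : Nat.card (Quotient J) ≤ 2 := by
      have hwd : ∀ (z w : annIndex r m), J z w →
          ((if J z a then true else false) = if J w a then true else false) := by
        intro z w hzw
        by_cases hz : J z a
        · rw [if_pos hz, if_pos (J.trans' (J.symm' hzw) hz)]
        · rw [if_neg hz, if_neg (fun hw => hz (J.trans' hzw hw))]
      set χ : Quotient J → Bool :=
        Quotient.lift (fun z => if J z a then true else false) hwd with hχ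
      have hinj : Function.Injective χ := by
        intro q1 q2 heq
        obtain ⟨z1, rfl⟩ := Quotient.exists_rep q1
        obtain ⟨z2, rfl⟩ := Quotient.exists_rep q2
        have heq' : (if J z1 a then true else false) = (if J z2 a then true else false) := heq
        by_cases h1 : J z1 a <;> by_cases h2 : J z2 a
        · exact Quotient.sound' (J.trans' h1 (J.symm' h2))
        · rw [if_pos h1, if_neg h2] at heq'; exact absurd heq' (by simp)
        · rw [if_neg h1, if_pos h2] at heq'; exact absurd heq' (by simp)
        · have hb1 : J z1 (σ a) := (hcover z1).resolve_left h1
          have hb2 : J z2 (σ a) := (hcover z2).resolve_left h2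
          exact Quotient.sound' (J.trans' hb1 (J.symm' hb2))
      have := Nat.card_le_card_of_injective χ hinj
      simpa [Nat.card_eq_fintype_card] using this
    have hgt : 1 < Nat.card (Quotient J) := by
      rw [Finite.one_lt_card_iff_nontrivial]
      exact ⟨⟨Quotient.mk'' a, Quotient.mk'' (σ a), fun h => hnJab (Quotient.exact' h)⟩⟩
    omega
  -- predicates and invariance witnesses
  have hpq : ∀ x, J x (σ a) ↔ ¬ J x a := by
    intro x
    constructor
    · intro hq hp
      exact hnJab (J.trans' (J.symm' hp) hq)
    · intro hnp
      exact (hcover x).resolve_left hnp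
  have hsA : ∀ x, J x a ↔ J (σsw x) a := fun x =>
    ⟨fun h => J.trans' (J.symm' (hJσswstep x)) h, fun h => J.trans' (hJσswstep x) h⟩
  have hgA : ∀ x, J x a ↔ J (γ x) a := fun x =>
    ⟨fun h => J.trans' (J.symm' (hJγstep x)) h, fun h => J.trans' (hJγstep x) h⟩
  have hsB : ∀ x, J x (σ a) ↔ J (σsw x) (σ a) := fun x =>
    ⟨fun h => J.trans' (J.symm' (hJσswstep x)) h, fun h => J.trans' (hJσswstep x) h⟩
  have hgB : ∀ x, J x (σ a) ↔ J (γ x) (σ a) := fun x =>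
    ⟨fun h => J.trans' (J.symm' (hJγstep x)) h, fun h => J.trans' (hJγstep x) h⟩
  have hsAinv : ∀ x, J x a ↔ J (σsw⁻¹ x) a := fun x => by
    have := hsA (σsw⁻¹ x)
    rw [show σsw (σsw⁻¹ x) = x from σsw.apply_symm_apply x] at this
    exact this.symm
  have hsBinv : ∀ x, J x (σ a) ↔ J (σsw⁻¹ x) (σ a) := fun x => by
    have := hsB (σsw⁻¹ x)
    rw [show σsw (σsw⁻¹ x) = x from σsw.apply_symm_apply x] at this
    exact this.symm
  have hmA : ∀ x, J x a ↔ J ((σsw⁻¹ * γ) x) a := fun x => (hgA x).trans (hsAinv (γ x))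
  have hmB : ∀ x, J x (σ a) ↔ J ((σsw⁻¹ * γ) x) (σ a) := fun x => (hgB x).trans (hsBinv (γ x))
  have hprodA : (σsw.subtypePerm (p := fun x => J x a) (fun x => (hsA x).symm))⁻¹ * γ.subtypePerm (p := fun x => J x a) (fun x => (hgA x).symm) = (σsw⁻¹ * γ).subtypePerm (p := fun x => J x a) (fun x => (hmA x).symm) := by
    ext x
    simp [Equiv.Perm.subtypePerm_apply, Equiv.Perm.inv_subtypePerm, Equiv.Perm.mul_apply]
    rfl
  have hprodB : (σsw.subtypePerm (p := fun x => J x (σ a)) (fun x => (hsB x).symm))⁻¹ * γ.subtypePerm (p := fun x => J x (σ a)) (fun x => (hgB x).symm) = (σsw⁻¹ * γ).subtypePerm (p := fun x => J x (σ a)) (fun x => (hmB x).symm) := by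
    ext x
    simp [Equiv.Perm.subtypePerm_apply, Equiv.Perm.inv_subtypePerm, Equiv.Perm.mul_apply]
    rfl
  -- connectivity of the restrictions
  have hconnA : ∀ x y, J x a → J y a → (cycleSetoid σsw ⊔ cycleSetoid γ) x y := by
    intro x y hx hy
    rw [sup_comm (cycleSetoid σsw) (cycleSetoid γ)]
    exact J.trans' hx (J.symm' hy)
  have hconnB : ∀ x y, J x (σ a) → J y (σ a) → (cycleSetoid σsw ⊔ cycleSetoid γ) x y := by
    intro x y hx hy
    rw [sup_comm (cycleSetoid σsw) (cycleSetoid γ)]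
    exact J.trans' hx (J.symm' hy)
  have htopA : cycleSetoid (σsw.subtypePerm (p := fun x => J x a) (fun x => (hsA x).symm)) ⊔ cycleSetoid (γ.subtypePerm (p := fun x => J x a) (fun x => (hgA x).symm)) = ⊤ :=
    join_restrict_eq_top σsw γ _ hsA hgA hconnA
  have htopB : cycleSetoid (σsw.subtypePerm (p := fun x => J x (σ a)) (fun x => (hsB x).symm)) ⊔ cycleSetoid (γ.subtypePerm (p := fun x => J x (σ a)) (fun x => (hgB x).symm)) = ⊤ :=
    join_restrict_eq_top σsw γ _ hsB hgB hconnB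
  -- counting
  have hsplitσsw := numCycles_subtype_add σsw _ _ hsA hsB hpq
  have hsplitγ := numCycles_subtype_add γ _ _ hgA hgB hpq
  have hsplitm := numCycles_subtype_add (σsw⁻¹ * γ) _ _ hmA hmB hpq
  rw [← hprodA, ← hprodB] at hsplitm
  have hcardAB : Nat.card (annIndex r m) = Nat.card {x // J x a} + Nat.card {x // J x (σ a)} :=
    card_subtype_add (fun x => J x a) (fun x => J x (σ a)) hpq
  have hglobi := genus_le σsw γ
  rw [show cycleSetoid σsw ⊔ cycleSetoid γ = J from sup_comm _ _, hcard2] at hglobi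
  have hgenA := genus_le (σsw.subtypePerm (p := fun x => J x a) (fun x => (hsA x).symm)) (γ.subtypePerm (p := fun x => J x a) (fun x => (hgA x).symm))
  have hgenB := genus_le (σsw.subtypePerm (p := fun x => J x (σ a)) (fun x => (hsB x).symm)) (γ.subtypePerm (p := fun x => J x (σ a)) (fun x => (hgB x).symm))
  rw [htopA] at hgenA
  rw [htopB] at hgenB
  have htopcardA : Nat.card (Quotient (⊤ : Setoid {x // J x a})) = 1 := by
    rw [Nat.card_eq_one_iff_unique]
    refine ⟨⟨fun q1 q2 => ?_⟩, ⟨Quotient.mk'' ⟨a, J.refl' a⟩⟩⟩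
    obtain ⟨z1, rfl⟩ := Quotient.exists_rep q1
    obtain ⟨z2, rfl⟩ := Quotient.exists_rep q2
    exact Quotient.sound' trivial
  have htopcardB : Nat.card (Quotient (⊤ : Setoid {x // J x (σ a)})) = 1 := by
    rw [Nat.card_eq_one_iff_unique]
    refine ⟨⟨fun q1 q2 => ?_⟩, ⟨Quotient.mk'' ⟨σ a, J.refl' (σ a)⟩⟩⟩
    obtain ⟨z1, rfl⟩ := Quotient.exists_rep q1
    obtain ⟨z2, rfl⟩ := Quotient.exists_rep q2
    exact Quotient.sound' trivial
  rw [htopcardA] at hgenA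
  rw [htopcardB] at hgenB
  -- values of γ * σsw versus γ * σ
  have hτ'a : (γ * σsw) a = (γ * σ) c := by
    simp only [Equiv.Perm.mul_apply, hswa]
  have hτ'c : (γ * σsw) c = (γ * σ) a := by
    simp only [Equiv.Perm.mul_apply, hswc]
  have hτ'b : (γ * σsw) (σ a) = (γ * σ) (σ c) := by
    simp only [Equiv.Perm.mul_apply, hswb, hσσ]
  have hτ'd : (γ * σsw) (σ c) = (γ * σ) (σ a) := by
    simp only [Equiv.Perm.mul_apply, hswd, hσσ]
  have hτ'other : ∀ x, x ≠ a → x ≠ σ a → x ≠ c → x ≠ σ c → (γ * σsw) x = (γ * σ) x := by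
    intro x k1 k2 k3 k4
    simp only [Equiv.Perm.mul_apply, hswother x k1 k2 k3 k4]
  have hJτ' : ∀ w, J w ((γ * σsw) w) := fun w =>
    J.trans' (hJσswstep w) (hJγstep (σsw w))
  have hback : ∀ x y, (γ * σsw).SameCycle x y → (γ * σ).SameCycle x y := by
    intro x y h
    refine sameCycle_le_setoid (γ * σsw) (cycleSetoid (γ * σ)) ?_ h
    intro z
    by_cases k1 : z = a
    · subst k1; rw [hτ'a]
      exact hsame₂.trans ⟨1, by rw [zpow_one]⟩
    by_cases k2 : z = σ a
    · subst k2; rw [hτ'b]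
      exact hbd_cyc.trans ⟨1, by rw [zpow_one]⟩
    by_cases k3 : z = c
    · subst k3; rw [hτ'c]
      exact hsame₂.symm.trans ⟨1, by rw [zpow_one]⟩
    by_cases k4 : z = σ c
    · subst k4; rw [hτ'd]
      exact hbd_cyc.symm.trans ⟨1, by rw [zpow_one]⟩
    · rw [hτ'other z k1 k2 k3 k4]
      exact ⟨1, by rw [zpow_one]⟩
  have hCL : ∀ z, (γ * σ).SameCycle a z →
      ((J z a → (γ * σsw).SameCycle a z) ∧ (J z (σ a) → (γ * σsw).SameCycle c z)) := by
    refine cycle_induction (γ * σ) _ a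
      ⟨fun _ => Equiv.Perm.SameCycle.refl _ _, fun hJ => absurd hJ hnJab⟩ ?_
    intro z hz ih
    obtain ⟨ih1, ih2⟩ := ih
    by_cases k1 : z = a
    · rw [k1]
      constructor
      · intro hJ
        exfalso
        have h2 := hJτ' c
        rw [hτ'c] at h2
        have h1 : J ((γ * σ) a) (σ a) := J.trans' (J.symm' h2) hJcb
        exact hnJab (J.trans' (J.symm' hJ) h1)
      · intro _
        rw [← hτ'c]
        exact ⟨1, by rw [zpow_one]⟩
    by_cases k3 : z = c
    · rw [k3]
      constructor
      · intro _
        rw [← hτ'a]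
        exact ⟨1, by rw [zpow_one]⟩
      · intro hJ
        exfalso
        have h2 := hJτ' a
        rw [hτ'a] at h2
        exact hnJab (J.trans' h2 hJ)
    by_cases k2 : z = σ a
    · rw [k2] at hz; exact absurd hz hnab
    by_cases k4 : z = σ c
    · rw [k4] at hz; exact absurd hz hnad
    · have heqz : (γ * σ) z = (γ * σsw) z := (hτ'other z k1 k2 k3 k4).symm
      have hJz : J z ((γ * σ) z) := by rw [heqz]; exact hJτ' z
      constructor
      · intro hJ
        have hza : J z a := J.trans' hJz hJ
        have h3 := (ih1 hza).trans (⟨1, by rw [zpow_one]⟩ :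
          (γ * σsw).SameCycle z ((γ * σsw) z))
        rwa [← heqz] at h3
      · intro hJ
        have hzb : J z (σ a) := J.trans' hJz hJ
        have h3 := (ih2 hzb).trans (⟨1, by rw [zpow_one]⟩ :
          (γ * σsw).SameCycle z ((γ * σsw) z))
        rwa [← heqz] at h3
  have hCL2 : ∀ z, (γ * σ).SameCycle (σ a) z →
      ((J z a → (γ * σsw).SameCycle (σ c) z) ∧ (J z (σ a) → (γ * σsw).SameCycle (σ a) z)) := by
    refine cycle_induction (γ * σ) _ (σ a)
      ⟨fun hJ => absurd (J.symm' hJ) hnJab, fun _ => Equiv.Perm.SameCycle.refl _ _⟩ ?_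
    intro z hz ih
    obtain ⟨ih1, ih2⟩ := ih
    by_cases k2 : z = σ a
    · rw [k2]
      constructor
      · intro _
        rw [← hτ'd]
        exact ⟨1, by rw [zpow_one]⟩
      · intro hJ
        exfalso
        have h2 := hJτ' (σ c)
        rw [hτ'd] at h2
        have h1 : J ((γ * σ) (σ a)) a := J.trans' (J.symm' h2) hJda
        exact hnJab (J.trans' (J.symm' h1) hJ)
    by_cases k4 : z = σ c
    · rw [k4]
      constructor
      · intro hJ
        exfalso
        have h2 := hJτ' (σ a)
        rw [hτ'b] at h2
        have h1 : J ((γ * σ) (σ c)) (σ a) := J.symm' h2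
        exact hnJab (J.trans' (J.symm' hJ) h1)
      · intro _
        rw [← hτ'b]
        exact ⟨1, by rw [zpow_one]⟩
    by_cases k1 : z = a
    · rw [k1] at hz; exact absurd hz.symm hnab
    by_cases k3 : z = c
    · rw [k3] at hz; exact absurd (hz.trans hsame₂.symm).symm hnab
    · have heqz : (γ * σ) z = (γ * σsw) z := (hτ'other z k1 k2 k3 k4).symm
      have hJz : J z ((γ * σ) z) := by rw [heqz]; exact hJτ' z
      constructor
      · intro hJ
        have hza : J z a := J.trans' hJz hJ
        have h3 := (ih1 hza).trans (⟨1, by rw [zpow_one]⟩ :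
          (γ * σsw).SameCycle z ((γ * σsw) z))
        rwa [← heqz] at h3
      · intro hJ
        have hzb : J z (σ a) := J.trans' hJz hJ
        have h3 := (ih2 hzb).trans (⟨1, by rw [zpow_one]⟩ :
          (γ * σsw).SameCycle z ((γ * σsw) z))
        rwa [← heqz] at h3
  have hambA : ∀ x y, J x a → J y a →
      ((γ * σ).SameCycle x y ↔ (γ * σsw).SameCycle x y) := by
    intro x y hx hy
    constructor
    · intro hxy
      by_cases h1 : (γ * σ).SameCycle a x
      · exact ((hCL x h1).1 hx).symm.trans ((hCL y (h1.trans hxy)).1 hy)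
      by_cases h2 : (γ * σ).SameCycle (σ a) x
      · exact ((hCL2 x h2).1 hx).symm.trans ((hCL2 y (h2.trans hxy)).1 hy)
      · refine (sameCycle_congr ?_ y).1 hxy
        intro w hw
        have hw1 : w ≠ a := fun h => h1 (by rw [h] at hw; exact hw.symm)
        have hw2 : w ≠ σ a := fun h => h2 (by rw [h] at hw; exact hw.symm)
        have hw3 : w ≠ c := fun h => h1 (hsame₂.trans (by rw [h] at hw; exact hw.symm))
        have hw4 : w ≠ σ c := fun h => h2 (hbd_cyc.trans (by rw [h] at hw; exact hw.symm))
        exact (hτ'other w hw1 hw2 hw3 hw4).symm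
    · exact hback x y
  have hambB : ∀ x y, J x (σ a) → J y (σ a) →
      ((γ * σ).SameCycle x y ↔ (γ * σsw).SameCycle x y) := by
    intro x y hx hy
    constructor
    · intro hxy
      by_cases h1 : (γ * σ).SameCycle a x
      · exact ((hCL x h1).2 hx).symm.trans ((hCL y (h1.trans hxy)).2 hy)
      by_cases h2 : (γ * σ).SameCycle (σ a) x
      · exact ((hCL2 x h2).2 hx).symm.trans ((hCL2 y (h2.trans hxy)).2 hy)
      · refine (sameCycle_congr ?_ y).1 hxy
        intro w hw
        have hw1 : w ≠ a := fun h => h1 (by rw [h] at hw; exact hw.symm)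
        have hw2 : w ≠ σ a := fun h => h2 (by rw [h] at hw; exact hw.symm)
        have hw3 : w ≠ c := fun h => h1 (hsame₂.trans (by rw [h] at hw; exact hw.symm))
        have hw4 : w ≠ σ c := fun h => h2 (hbd_cyc.trans (by rw [h] at hw; exact hw.symm))
        exact (hτ'other w hw1 hw2 hw3 hw4).symm
    · exact hback x y
  refine ⟨⟨hcard2, hJad, hJbc, hnJab⟩, hsA, hgA, hsB, hgB, ⟨htopA, ?_⟩, ⟨htopB, ?_⟩, ?_, ?_⟩
  · omega
  · omega
  · intro x y
    exact (hambA x.1 y.1 x.2 y.2).trans (Equiv.Perm.sameCycle_subtypePerm (p := fun x => J x a) (f := γ * σsw)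
      (h := fun z => (hgA (σsw z)).symm.trans (hsA z).symm)).symm
  · intro x y
    exact (hambB x.1 y.1 x.2 y.2).trans (Equiv.Perm.sameCycle_subtypePerm (p := fun x => J x (σ a)) (f := γ * σsw)
      (h := fun z => (hgB (σsw z)).symm.trans (hsB z).symm)).symm
end

section
/- If (τ,σ₁) and (τ,σ₂) are both loop-free non-crossing pair partitioned permutations of the (m_1,…,m_r)-annulus (elements of PS_{NC_2}^{loop-free}(m_1,…,m_r)) with the same outer partition τ, then σ₁ = σ₂. -/
/-- Map from the blocks of a finer setoid to those of a coarser one. -/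
def blockMap {α : Type*} {s t : Setoid α} (h : s ≤ t) : Quotient s → Quotient t :=
  Quotient.lift (fun a => Quotient.mk t a) (fun _ _ hab => Quotient.sound (h hab))

/-- The bipartite multigraph with white vertices `α`, black vertices `β`
and one edge for each element of `ε`, with endpoints `f e` and `g e`;
recorded as a simple graph for connectivity purposes. -/
def bipGraph {α β ε : Type*} (f : ε → α) (g : ε → β) : SimpleGraph (α ⊕ β) where
  Adj x y := ∃ e, (x = Sum.inl (f e) ∧ y = Sum.inr (g e)) ∨
    (y = Sum.inl (f e) ∧ x = Sum.inr (g e))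
  symm := by
    constructor
    rintro x y ⟨e, h | h⟩
    · exact ⟨e, Or.inr h⟩
    · exact ⟨e, Or.inl h⟩
  loopless := by
    constructor
    rintro x ⟨e, ⟨h1, h2⟩ | ⟨h1, h2⟩⟩ <;> subst h1 <;> simp at h2

/-- The bipartite multigraph with edge set `ε` and endpoint maps `f`, `g` is a
tree: connected, and the number of vertices exceeds the number of edges by 1. -/
def isTreeBip {α β ε : Type*} (f : ε → α) (g : ε → β) : Prop :=
  (bipGraph f g).Connected ∧ Nat.card (α ⊕ β) = Nat.card ε + 1

/-- `(τ,σ)` is a loop-free non-crossing pair partitioned permutation relative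
to `γ`: `σ` is a pairing (fixed-point-free involution) with
`#(σ)+#(γ)+#(σ⁻¹γ) = m + 2#(σ∨γ)`, every cycle of `σ` is contained in a block
of `τ`, the bipartite graph `Γ(τ,σ,γ)` (white vertices the blocks of `σ∨γ`,
black vertices the blocks of `τ`, one edge per cycle of `σ`) is a tree, and
every loop block of `σ` (a cycle `{u, σ u}` with `u`, `σ u` in the same cycle
of `γσ`) is itself a block of `τ`. -/
def IsLoopFreeNCPairPartitionedPerm {α : Type*} (γ σ : Equiv.Perm α)
    (τ : Setoid α) : Prop :=
  (∀ x, σ x ≠ x) ∧ σ * σ = 1 ∧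
  numCycles σ + numCycles γ + numCycles (σ⁻¹ * γ) =
    Nat.card α + 2 * Nat.card (Quotient (cycleSetoid σ ⊔ cycleSetoid γ)) ∧
  (∃ h : cycleSetoid σ ≤ τ,
    isTreeBip
      (blockMap (le_sup_left : cycleSetoid σ ≤ cycleSetoid σ ⊔ cycleSetoid γ))
      (blockMap h)) ∧
  (∀ u v, (γ * σ).SameCycle u (σ u) → τ u v → v = u ∨ v = σ u)


section AuxGraph
open SimpleGraph
set_option linter.unusedSectionVars false

private lemma del_edge_connected {V : Type*} {G : SimpleGraph V} {x y : V}
    (hc : G.Connected)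
    (hr : (G \ fromEdgeSet {s(x, y)}).Reachable x y) :
    (G \ fromEdgeSet {s(x, y)}).Connected := by
  haveI := hc.nonempty
  have hpre : (G \ fromEdgeSet {s(x, y)}).Preconnected := by
    intro u w
    obtain ⟨p⟩ := hc.preconnected u w
    induction p with
    | nil => exact Reachable.refl _
    | @cons u' v' w' h q ih =>
      refine Reachable.trans ?_ ih
      by_cases he : s(u', v') = s(x, y)
      · rw [Sym2.eq_iff] at he
        rcases he with ⟨rfl, rfl⟩ | ⟨rfl, rfl⟩
        · exact hr
        · exact hr.symm
      · exact Adj.reachable (by rw [sdiff_adj]; exact ⟨h, by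
          rw [fromEdgeSet_adj]; rintro ⟨h1, -⟩; exact he h1⟩)
  exact ⟨hpre⟩

private lemma cycle_gives_smaller {V : Type*} [Fintype V] {G : SimpleGraph V}
    (hc : G.Connected) (hac : ¬ G.IsAcyclic) :
    ∃ G' : SimpleGraph V, G'.Connected ∧ Nat.card G'.edgeSet + 1 = Nat.card G.edgeSet := by
  classical
  rw [SimpleGraph.IsAcyclic] at hac
  push_neg at hac
  obtain ⟨v, c, hcyc⟩ := hac
  have hlen : c.edges ≠ [] := by
    have h3 := hcyc.three_le_length
    have : c.edges.length = c.length := c.length_edges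
    intro h
    rw [h] at this
    simp at this
    omega
  obtain ⟨e, he⟩ := List.exists_mem_of_ne_nil _ hlen
  induction e with
  | _ x y =>
    have hxy : G.Adj x y ∧ (G \ fromEdgeSet {s(x, y)}).Reachable x y :=
      adj_and_reachable_delete_edges_iff_exists_cycle.2 ⟨v, c, hcyc, he⟩
    refine ⟨G \ fromEdgeSet {s(x, y)}, del_edge_connected hc hxy.2, ?_⟩
    have hes : (G \ fromEdgeSet {s(x, y)}).edgeSet = G.edgeSet \ {s(x, y)} := by
      rw [edgeSet_sdiff, edgeSet_fromEdgeSet, edgeSet_sdiff_sdiff_isDiag]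
    rw [hes, Nat.card_coe_set_eq, Nat.card_coe_set_eq]
    exact Set.ncard_diff_singleton_add_one ((mem_edgeSet G).2 hxy.1) (Set.toFinite _)

/-- A connected graph on `n` vertices has at least `n - 1` edges. -/
private lemma connected_card_vert_le {V : Type*} [Finite V] (G : SimpleGraph V)
    (hc : G.Connected) : Nat.card V ≤ Nat.card G.edgeSet + 1 := by
  classical
  cases nonempty_fintype V
  generalize hn : Nat.card G.edgeSet = n
  induction n using Nat.strong_induction_on generalizing G with
  | _ n ih =>
  by_cases hac : G.IsAcyclic
  · have ht : G.IsTree := ⟨hc, hac⟩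
    have h1 := ht.card_edgeFinset
    have h2 : G.edgeFinset.card = Fintype.card G.edgeSet := G.edgeFinset_card
    have h3 : Nat.card G.edgeSet = Fintype.card G.edgeSet := Nat.card_eq_fintype_card
    rw [Nat.card_eq_fintype_card]
    omega
  · obtain ⟨G', hc', hcard⟩ := cycle_gives_smaller hc hac
    have := ih (Nat.card G'.edgeSet) (by omega) G' hc' rfl
    omega

/-- connected + card V = card E + 1 implies acyclic -/
private lemma connected_card_isAcyclic {V : Type*} [Finite V] (G : SimpleGraph V)
    (hc : G.Connected) (hcard : Nat.card V = Nat.card G.edgeSet + 1) : G.IsAcyclic := by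
  classical
  cases nonempty_fintype V
  by_contra hac
  obtain ⟨G', hc', hcard'⟩ := cycle_gives_smaller hc hac
  have := connected_card_vert_le G' hc'
  omega


variable {A B ε : Type*} [Finite A] [Finite B] [Finite ε] {f : ε → A} {g : ε → B}

private lemma bip_adj (e : ε) : (bipGraph f g).Adj (Sum.inl (f e)) (Sum.inr (g e)) :=
  ⟨e, Or.inl ⟨rfl, rfl⟩⟩

private noncomputable def bipEdge (f : ε → A) (g : ε → B) (e : ε) : (bipGraph f g).edgeSet :=
  ⟨s(Sum.inl (f e), Sum.inr (g e)), (bipGraph f g).mem_edgeSet.2 (bip_adj e)⟩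

private lemma bipEdge_surj : Function.Surjective (bipEdge f g) := by
  rintro ⟨es, hes⟩
  induction es with
  | _ u v =>
    rw [SimpleGraph.mem_edgeSet] at hes
    obtain ⟨e, ⟨h1, h2⟩ | ⟨h1, h2⟩⟩ := hes
    · subst h1; subst h2; exact ⟨e, rfl⟩
    · subst h1; subst h2
      exact ⟨e, Subtype.ext Sym2.eq_swap⟩

private lemma bip_card_edgeSet (h : isTreeBip f g) :
    Nat.card (bipGraph f g).edgeSet = Nat.card ε := by
  have h1 : Nat.card (A ⊕ B) ≤ Nat.card (bipGraph f g).edgeSet + 1 :=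
    connected_card_vert_le _ h.1
  have h2 : Nat.card (bipGraph f g).edgeSet ≤ Nat.card ε :=
    Nat.card_le_card_of_surjective _ bipEdge_surj
  have h3 := h.2
  omega

private lemma bipEdge_inj (h : isTreeBip f g) : Function.Injective (bipEdge f g) := by
  classical
  haveI : Fintype ε := Fintype.ofFinite ε
  haveI : Fintype (bipGraph f g).edgeSet := Fintype.ofFinite _
  have hcard : Fintype.card ε = Fintype.card (bipGraph f g).edgeSet := by
    have := bip_card_edgeSet h
    rw [Nat.card_eq_fintype_card, Nat.card_eq_fintype_card] at this
    omega
  have := (Fintype.bijective_iff_surjective_and_card (bipEdge f g)).2 ⟨bipEdge_surj, hcard⟩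
  exact this.1

/-- no parallel edges: the endpoints determine the edge -/
private lemma bip_no_parallel (h : isTreeBip f g) {e₁ e₂ : ε}
    (hf : f e₁ = f e₂) (hg : g e₁ = g e₂) : e₁ = e₂ :=
  bipEdge_inj h (Subtype.ext (show s(Sum.inl (f e₁), Sum.inr (g e₁)) =
    s(Sum.inl (f e₂), Sum.inr (g e₂)) by rw [hf, hg]))

/-- every edge is a bridge -/
private lemma bip_bridge (h : isTreeBip f g) (e₀ : ε) :
    ¬ ((bipGraph f g) \ fromEdgeSet {s(Sum.inl (f e₀), Sum.inr (g e₀))}).Reachable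
      (Sum.inl (f e₀)) (Sum.inr (g e₀)) := by
  have hac : (bipGraph f g).IsAcyclic := by
    apply connected_card_isAcyclic _ h.1
    rw [bip_card_edgeSet h]
    exact h.2
  exact isBridge_iff.1 (isAcyclic_iff_forall_adj_isBridge.1 hac (bip_adj e₀))

end AuxGraph

section PermHelpers

variable {α : Type*}

private lemma invol_zpow {σ : Equiv.Perm α} (h : σ * σ = 1) (n : ℤ) :
    σ ^ n = 1 ∨ σ ^ n = σ := by
  have h2 : σ ^ (2 : ℤ) = 1 := by
    rw [show (2:ℤ) = 1 + 1 from rfl, zpow_add, zpow_one, h]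
  rcases Int.even_or_odd n with ⟨k, hk⟩ | ⟨k, hk⟩
  · left
    rw [hk, show k + k = 2 * k by ring, zpow_mul, h2, one_zpow]
  · right
    rw [hk, zpow_add, zpow_mul, h2, one_zpow, zpow_one, one_mul]

private lemma sameCycle_invol {σ : Equiv.Perm α} (h : σ * σ = 1) {x y : α}
    (hs : σ.SameCycle x y) : y = x ∨ y = σ x := by
  obtain ⟨n, rfl⟩ := hs
  rcases invol_zpow h n with h' | h' <;> rw [h']
  · left; rfl
  · right; rfl

private lemma invol_apply_apply {σ : Equiv.Perm α} (h : σ * σ = 1) (x : α) :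
    σ (σ x) = x := by
  have := congrArg (fun f : Equiv.Perm α => f x) h
  simpa [Equiv.Perm.mul_apply] using this

private lemma rel_sup_left {σ γ : Equiv.Perm α} {x y : α} (h : σ.SameCycle x y) :
    (cycleSetoid σ ⊔ cycleSetoid γ) x y :=
  Setoid.le_def.mp le_sup_left h

private lemma rel_sup_right {σ γ : Equiv.Perm α} {x y : α} (h : γ.SameCycle x y) :
    (cycleSetoid σ ⊔ cycleSetoid γ) x y :=
  Setoid.le_def.mp le_sup_right h

private lemma sameCycle_apply_self (σ : Equiv.Perm α) (x : α) : σ.SameCycle x (σ x) :=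
  ⟨1, by simp⟩

private lemma rel_of_sameCycle_mul (γ σ : Equiv.Perm α) {x y : α}
    (h : (γ * σ).SameCycle x y) : (cycleSetoid σ ⊔ cycleSetoid γ) x y := by
  obtain ⟨n, rfl⟩ := h
  set S := cycleSetoid σ ⊔ cycleSetoid γ with hS
  induction n using Int.induction_on with
  | zero => simpa using S.refl x
  | succ n ih =>
    have hstep : ((γ * σ) ^ ((n : ℤ) + 1)) x = γ (σ (((γ * σ) ^ (n : ℤ)) x)) := by
      rw [show (n:ℤ) + 1 = 1 + n by ring, zpow_add, zpow_one]
      simp [Equiv.Perm.mul_apply]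
    rw [hstep]
    exact S.trans ih (S.trans (rel_sup_left (sameCycle_apply_self σ _))
      (rel_sup_right (sameCycle_apply_self γ _)))
  | pred n ih =>
    have hstep : ((γ * σ) ^ (-(n : ℤ) - 1)) x = σ⁻¹ (γ⁻¹ (((γ * σ) ^ (-(n : ℤ))) x)) := by
      rw [show -(n:ℤ) - 1 = -1 + -(n:ℤ) by ring, zpow_add, zpow_neg_one, mul_inv_rev]
      simp [Equiv.Perm.mul_apply]
    rw [hstep]
    have h1 : S (((γ * σ) ^ (-(n:ℤ))) x) (γ⁻¹ (((γ * σ) ^ (-(n:ℤ))) x)) :=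
      rel_sup_right ⟨-1, by simp⟩
    have h2 : S (γ⁻¹ (((γ * σ) ^ (-(n:ℤ))) x)) (σ⁻¹ (γ⁻¹ (((γ * σ) ^ (-(n:ℤ))) x))) :=
      rel_sup_left ⟨-1, by simp⟩
    exact S.trans ih (S.trans h1 h2)

end PermHelpers

private lemma exists_flip {α : Type*} [Fintype α] [DecidableEq α] (π : Equiv.Perm α)
    (p : α → Prop) {a : α} (hpa : p a) (hna : ¬ p (π a)) :
    ∃ x, π.SameCycle a x ∧ ¬ p x ∧ p (π x) := by
  classical
  set o : Finset α := Finset.univ.filter (fun x => π.SameCycle a x) with ho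
  have hmem : ∀ x, x ∈ o ↔ π.SameCycle a x := by
    intro x; simp [ho]
  have hbij : (o.filter fun x => p (π x)).card = (o.filter fun x => p x).card := by
    refine Finset.card_bij (fun x _ => π x) ?_ ?_ ?_
    · intro x hx
      rw [Finset.mem_filter] at hx ⊢
      exact ⟨(hmem _).2 (((hmem _).1 hx.1).trans (sameCycle_apply_self π x)), hx.2⟩
    · intro x₁ _ x₂ _ h
      exact π.injective h
    · intro y hy
      rw [Finset.mem_filter] at hy
      refine ⟨π⁻¹ y, ?_, ?_⟩
      · rw [Finset.mem_filter]
        constructor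
        · exact (hmem _).2 (((hmem _).1 hy.1).trans ⟨-1, by simp⟩)
        · simpa using hy.2
      · simp
  have e1 : ((o.filter fun x => p x ∧ p (π x))).card
      + ((o.filter fun x => p x ∧ ¬ p (π x))).card = (o.filter fun x => p x).card := by
    rw [← Finset.filter_filter, ← Finset.filter_filter]
    exact Finset.card_filter_add_card_filter_not (p := fun x => p (π x))
  have e2 : ((o.filter fun x => p (π x) ∧ p x)).card
      + ((o.filter fun x => p (π x) ∧ ¬ p x)).card = (o.filter fun x => p (π x)).card := by
    rw [← Finset.filter_filter, ← Finset.filter_filter]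
    exact Finset.card_filter_add_card_filter_not (p := fun x => p x)
  have hc1 : (o.filter fun x => p x ∧ p (π x)) = (o.filter fun x => p (π x) ∧ p x) :=
    Finset.filter_congr (fun x _ => by rw [and_comm])
  have hc2 : (o.filter fun x => ¬ p x ∧ p (π x)) = (o.filter fun x => p (π x) ∧ ¬ p x) :=
    Finset.filter_congr (fun x _ => by rw [and_comm])
  rw [hc1] at e1
  rw [← hc2] at e2
  have hane : a ∈ o.filter fun x => p x ∧ ¬ p (π x) := by
    rw [Finset.mem_filter]
    exact ⟨(hmem _).2 (Equiv.Perm.SameCycle.refl _ _), hpa, hna⟩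
  have hpos : 0 < (o.filter fun x => ¬ p x ∧ p (π x)).card := by
    have h1 : 0 < (o.filter fun x => p x ∧ ¬ p (π x)).card :=
      Finset.card_pos.2 ⟨a, hane⟩
    omega
  obtain ⟨x, hx⟩ := Finset.card_pos.1 hpos
  rw [Finset.mem_filter] at hx
  exact ⟨x, (hmem _).1 hx.1, hx.2.1, hx.2.2⟩

open SimpleGraph in
private lemma pairing_unique_abstract {α : Type*} [Finite α]
    (γ σ₁ σ₂ : Equiv.Perm α) (τ : Setoid α)
    (h₁ : IsLoopFreeNCPairPartitionedPerm γ σ₁ τ)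
    (h₂ : IsLoopFreeNCPairPartitionedPerm γ σ₂ τ) : σ₁ = σ₂ := by
  classical
  cases nonempty_fintype α
  obtain ⟨hfp₁, hinv₁, -, ⟨hle₁, htree₁⟩, hloop₁⟩ := h₁
  obtain ⟨hfp₂, hinv₂, -, ⟨hle₂, htree₂⟩, hloop₂⟩ := h₂
  have hτ₁ : ∀ x, τ x (σ₁ x) := fun x => hle₁ (sameCycle_apply_self σ₁ x)
  have hτ₂ : ∀ x, τ x (σ₂ x) := fun x => hle₂ (sameCycle_apply_self σ₂ x)
  -- no-parallel-edge consequences of the two trees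
  have hnp₁ : ∀ x y : α,
      Quotient.mk (cycleSetoid σ₁ ⊔ cycleSetoid γ) x =
        Quotient.mk (cycleSetoid σ₁ ⊔ cycleSetoid γ) y →
      Quotient.mk τ x = Quotient.mk τ y → y = x ∨ y = σ₁ x := by
    intro x y hW hB
    have he : Quotient.mk (cycleSetoid σ₁) x = Quotient.mk (cycleSetoid σ₁) y :=
      bip_no_parallel htree₁
        (e₁ := Quotient.mk (cycleSetoid σ₁) x) (e₂ := Quotient.mk (cycleSetoid σ₁) y) hW hB
    exact sameCycle_invol hinv₁ (Quotient.exact he)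
  have hnp₂ : ∀ x y : α,
      Quotient.mk (cycleSetoid σ₂ ⊔ cycleSetoid γ) x =
        Quotient.mk (cycleSetoid σ₂ ⊔ cycleSetoid γ) y →
      Quotient.mk τ x = Quotient.mk τ y → y = x ∨ y = σ₂ x := by
    intro x y hW hB
    have he : Quotient.mk (cycleSetoid σ₂) x = Quotient.mk (cycleSetoid σ₂) y :=
      bip_no_parallel htree₂
        (e₁ := Quotient.mk (cycleSetoid σ₂) x) (e₂ := Quotient.mk (cycleSetoid σ₂) y) hW hB
    exact sameCycle_invol hinv₂ (Quotient.exact he)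
  by_cases hstr : ∀ x, Quotient.mk (cycleSetoid σ₁ ⊔ cycleSetoid γ) (σ₂ x) =
      Quotient.mk (cycleSetoid σ₁ ⊔ cycleSetoid γ) x
  · -- no straddler : σ₁ = σ₂ directly
    apply Equiv.ext
    intro x
    rcases hnp₁ x (σ₂ x) (hstr x).symm (Quotient.sound (hτ₂ x)) with h' | h'
    · exact absurd h' (hfp₂ x)
    · exact h'.symm
  · push_neg at hstr
    obtain ⟨a, ha⟩ := hstr
    exfalso
    -- the bridge
    have hbridge := bip_bridge htree₁ (Quotient.mk (cycleSetoid σ₁) a)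
    set G' := (bipGraph
        (blockMap (le_sup_left : cycleSetoid σ₁ ≤ cycleSetoid σ₁ ⊔ cycleSetoid γ))
        (blockMap hle₁)) \
      fromEdgeSet {s(Sum.inl (Quotient.mk (cycleSetoid σ₁ ⊔ cycleSetoid γ) a),
        Sum.inr (Quotient.mk τ a))} with hG'
    have hbridge' : ¬ G'.Reachable
        (Sum.inl (Quotient.mk (cycleSetoid σ₁ ⊔ cycleSetoid γ) a))
        (Sum.inr (Quotient.mk τ a)) := hbridge
    -- surviving adjacencies
    have hadj' : ∀ x : α,
        ¬(Quotient.mk (cycleSetoid σ₁ ⊔ cycleSetoid γ) x =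
            Quotient.mk (cycleSetoid σ₁ ⊔ cycleSetoid γ) a ∧
          Quotient.mk τ x = Quotient.mk τ a) →
        G'.Adj (Sum.inl (Quotient.mk (cycleSetoid σ₁ ⊔ cycleSetoid γ) x))
          (Sum.inr (Quotient.mk τ x)) := by
      intro x hx
      rw [hG', sdiff_adj]
      constructor
      · exact bip_adj (f := blockMap (le_sup_left : cycleSetoid σ₁ ≤ cycleSetoid σ₁ ⊔ cycleSetoid γ))
          (g := blockMap hle₁) (Quotient.mk (cycleSetoid σ₁) x)
      · rw [fromEdgeSet_adj]
        rintro ⟨hs, -⟩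
        rw [Set.mem_singleton_iff, Sym2.eq_iff] at hs
        rcases hs with ⟨hs1, hs2⟩ | ⟨hs1, hs2⟩
        · exact hx ⟨Sum.inl.inj hs1, Sum.inr.inj hs2⟩
        · simp at hs1
    -- the predicate
    set p : α → Prop := fun x => G'.Reachable
      (Sum.inl (Quotient.mk (cycleSetoid σ₁ ⊔ cycleSetoid γ) a))
      (Sum.inl (Quotient.mk (cycleSetoid σ₁ ⊔ cycleSetoid γ) x)) with hp
    have hpγ : ∀ x, Quotient.mk (cycleSetoid σ₁ ⊔ cycleSetoid γ) (γ x) =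
        Quotient.mk (cycleSetoid σ₁ ⊔ cycleSetoid γ) x :=
      fun x => (Quotient.sound (rel_sup_right (σ := σ₁) (sameCycle_apply_self γ x))).symm
    have hπeq : ∀ x, Quotient.mk (cycleSetoid σ₁ ⊔ cycleSetoid γ) ((γ * σ₂) x) =
        Quotient.mk (cycleSetoid σ₁ ⊔ cycleSetoid γ) (σ₂ x) := by
      intro x
      rw [Equiv.Perm.mul_apply]
      exact hpγ (σ₂ x)
    have hpa : p a := Reachable.refl _
    have hτB : ∀ x : α, Quotient.mk τ (σ₂ x) = Quotient.mk τ x :=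
      fun x => (Quotient.sound (hτ₂ x)).symm
    have hnpσa : ¬ p ((γ * σ₂) a) := by
      intro hre
      apply hbridge'
      rw [hp] at hre
      rw [hπeq a] at hre
      have hadjx : G'.Adj
          (Sum.inl (Quotient.mk (cycleSetoid σ₁ ⊔ cycleSetoid γ) (σ₂ a)))
          (Sum.inr (Quotient.mk τ (σ₂ a))) := by
        apply hadj'
        rintro ⟨h1, -⟩
        exact ha h1
      have := hre.trans hadjx.reachable
      rwa [hτB a] at this
    obtain ⟨x, hxcyc, hnpx, hpπx⟩ := exists_flip (γ * σ₂) p hpa hnpσa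
    have hpσx : p (σ₂ x) := by
      rw [hp] at hpπx ⊢
      rwa [hπeq x] at hpπx
    by_cases c1 : Quotient.mk (cycleSetoid σ₁ ⊔ cycleSetoid γ) x =
        Quotient.mk (cycleSetoid σ₁ ⊔ cycleSetoid γ) a ∧
        Quotient.mk τ x = Quotient.mk τ a
    · -- then p x holds trivially: contradiction
      apply hnpx
      show G'.Reachable
        (Sum.inl (Quotient.mk (cycleSetoid σ₁ ⊔ cycleSetoid γ) a))
        (Sum.inl (Quotient.mk (cycleSetoid σ₁ ⊔ cycleSetoid γ) x))
      rw [c1.1]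
    · by_cases c2 : Quotient.mk (cycleSetoid σ₁ ⊔ cycleSetoid γ) (σ₂ x) =
          Quotient.mk (cycleSetoid σ₁ ⊔ cycleSetoid γ) a ∧
          Quotient.mk τ (σ₂ x) = Quotient.mk τ a
      · -- σ₂ x ∈ {a, σ₁ a}
        rcases hnp₁ a (σ₂ x) c2.1.symm c2.2.symm with h' | h'
        · -- σ₂ x = a, so x = σ₂ a : loop block
          have hxa : x = σ₂ a := by
            have := congrArg σ₂ h'
            rwa [invol_apply_apply hinv₂ x] at this
          have hsc : (γ * σ₂).SameCycle a (σ₂ a) := by rwa [hxa] at hxcyc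
          rcases hloop₂ a (σ₁ a) hsc (hτ₁ a) with hb | hb
          · exact hfp₁ a hb
          · apply ha
            rw [← hb]
            exact (Quotient.sound (rel_sup_left (γ := γ) (sameCycle_apply_self σ₁ a))).symm
        · -- σ₂ x = σ₁ a : same σ₂∨γ class for a and σ₁ a
          have hrel : (cycleSetoid σ₂ ⊔ cycleSetoid γ) a (σ₁ a) := by
            have r1 := rel_of_sameCycle_mul γ σ₂ hxcyc
            have r2 : (cycleSetoid σ₂ ⊔ cycleSetoid γ) x (σ₂ x) :=
              rel_sup_left (sameCycle_apply_self σ₂ x)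
            have r3 := (cycleSetoid σ₂ ⊔ cycleSetoid γ).trans r1 r2
            rwa [h'] at r3
          rcases hnp₂ a (σ₁ a) (Quotient.sound hrel) (Quotient.sound (hτ₁ a)) with hb | hb
          · exact hfp₁ a hb
          · apply ha
            rw [← hb]
            exact (Quotient.sound (rel_sup_left (γ := γ) (sameCycle_apply_self σ₁ a))).symm
      · -- both edges survive : p x ↔ p (σ₂ x), contradiction
        apply hnpx
        have had1 := hadj' (σ₂ x) c2
        have had2 := hadj' x c1
        have hr1 := hpσx.trans had1.reachable
        rw [hτB x] at hr1
        rw [hp]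
        exact hr1.trans had2.reachable.symm


/-- Uniqueness of the pairing in a loop-free non-crossing pair partitioned
permutation: if `(τ,σ₁)` and `(τ,σ₂)` are both elements of
`PS_{NC₂}^{loop-free}(m_1,…,m_r)` with the same outer partition `τ`, then
`σ₁ = σ₂`. -/
theorem pairing_unique_of_loopFree (r : ℕ) (m : Fin r → ℕ)
    (τ : Setoid (annIndex r m)) (σ₁ σ₂ : Equiv.Perm (annIndex r m))
    (h₁ : IsLoopFreeNCPairPartitionedPerm (gammaAnn r m) σ₁ τ)
    (h₂ : IsLoopFreeNCPairPartitionedPerm (gammaAnn r m) σ₂ τ) :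
    σ₁ = σ₂ := by
  haveI : Finite (annIndex r m) := by unfold annIndex; infer_instance
  exact pairing_unique_abstract (gammaAnn r m) σ₁ σ₂ τ h₁ h₂
end
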